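/- arXiv:math/0502304 — 3 statements merged into one kernel-verified Lean document; each statement's English description precedes it below -/
import Mathlib

section
/- (Theorem 1: structure of the phase diagram.) Under the basic assumptions on the disorder, there exists an increasing function h_c : [0,∞) → [0,∞] such that the localized region satisfies L = {(λ,h) : h < h_c(λ)} and the delocalized region satisfies D = {(λ,h) : h ≥ h_c(λ)}. Moreover h_c is continuous on [0,∞) if it is everywhere finite, and otherwise it is continuous on [0, sup{λ : h_c(λ) < ∞}). -/
open MeasureTheory ProbabilityTheory Filter Finset

noncomputable section

/-- Indicator of a proposition. -/
def ind (p : Prop) : ℝ :=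
  letI := Classical.propDecidable p
  if p then 1 else 0

/-- Extend a finite sequence of steps (`true` = step up) to an infinite one. -/
def extendPath (N : ℕ) (ε : Fin N → Bool) : ℕ → Bool :=
  fun j => if h : j < N then ε ⟨j, h⟩ else false

/-- Position `S_n` of the simple random walk with steps `ε`. -/
def walkPos (ε : ℕ → Bool) (n : ℕ) : ℤ :=
  ∑ j ∈ Finset.range n, (if ε j then (1 : ℤ) else -1)

/-- Sign of `S_n`, with the convention `sign S_{2n} = sign S_{2n-1}` whenever `S_{2n} = 0`. -/
def sgn (ε : ℕ → Bool) (n : ℕ) : ℤ :=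
  if 0 < walkPos ε n then 1
  else if walkPos ε n < 0 then -1
  else if 0 < walkPos ε (n - 1) then 1 else -1

/-- The set of times `1 ≤ n ≤ N` spent in the lower half plane (`Δ_n = 1`). -/
def lowSet (ε : ℕ → Bool) (N : ℕ) : Finset ℕ :=
  (Finset.Icc 1 N).filter (fun n => sgn ε n = -1)

/-- `𝒩 = Σ_{n=1}^N Δ_n`, the number of monomers in the lower half plane. -/
def NVis (ε : ℕ → Bool) (N : ℕ) : ℕ := (lowSet ε N).card

/-- `max 𝒜`, the last exit point from the lower half plane (`𝒜 = lowSet ∪ {0}`). -/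
def maxA (ε : ℕ → Bool) (N : ℕ) : ℕ := (lowSet ε N).sup id

/-- Expectation, under the simple random walk law, of a function of the first `N` steps. -/
def pathE (N : ℕ) (f : (ℕ → Bool) → ℝ) : ℝ :=
  (1 / 2 : ℝ) ^ N * ∑ ε : Fin N → Bool, f (extendPath N ε)

/-- Boltzmann weight `exp(-2λ Σ_{n=1}^N (ω_n + h) Δ_n)`. -/
def weight (lam h : ℝ) (ω : ℕ → ℝ) (N : ℕ) (ε : ℕ → Bool) : ℝ :=
  Real.exp (-(2 * lam) * ∑ n ∈ lowSet ε N, (ω n + h))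

/-- Restricted partition function `Z_{N,ω}(A)`. -/
def Zev (lam h : ℝ) (N : ℕ) (ω : ℕ → ℝ) (A : (ℕ → Bool) → Prop) : ℝ :=
  pathE N (fun ε => weight lam h ω N ε * ind (A ε))

/-- Endpoint constraint: `a = true` is the constrained case `S_N = 0`, `a = false` the free one. -/
def endOK (a : Bool) (N : ℕ) (ε : ℕ → Bool) : Prop := a = true → walkPos ε N = 0

/-- Partition function `Z^a_{N,ω}` (`a = false`: free, `a = true`: constrained). -/
def Zpart (a : Bool) (lam h : ℝ) (N : ℕ) (ω : ℕ → ℝ) : ℝ :=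
  Zev lam h N ω (endOK a N)

/-- Partition function `Z̃^a_{N,ω}` with the `sign` form of the Hamiltonian. -/
def Ztilde (a : Bool) (lam h : ℝ) (N : ℕ) (ω : ℕ → ℝ) : ℝ :=
  pathE N (fun ε =>
    Real.exp (lam * ∑ n ∈ Finset.Icc 1 N, (ω n + h) * (sgn ε n : ℝ)) * ind (endOK a N ε))

/-- Polymer measure of the event `A`: `P^a_{N,ω}(A)`. -/
def polyProb (a : Bool) (lam h : ℝ) (N : ℕ) (ω : ℕ → ℝ) (A : (ℕ → Bool) → Prop) : ℝ :=
  Zev lam h N ω (fun ε => A ε ∧ endOK a N ε) / Zpart a lam h N ω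

/-- Basic assumptions: `P` is the law of an IID sequence with marginal `μ`,
`μ` symmetric, of unit variance and with finite exponential moments near `0`. -/
def BasicSetup (mu : Measure ℝ) (P : Measure (ℕ → ℝ)) : Prop :=
  IsProbabilityMeasure mu ∧ IsProbabilityMeasure P ∧
    mu.map (fun x => -x) = mu ∧
    (∫ x, x ^ 2 ∂mu) = 1 ∧
    (∃ t₀ > (0 : ℝ), ∀ t : ℝ, |t| ≤ t₀ → Integrable (fun x => Real.exp (t * x)) mu) ∧
    (∀ n : ℕ, P.map (fun ω => ω n) = mu) ∧
    iIndepFun (fun n (ω : ℕ → ℝ) => ω n) P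

/-- Deviation inequality above the mean, with constant `C`, for convex Lipschitz functions
(Lipschitz with respect to the Euclidean distance) of `ω_1, …, ω_N`. -/
def DevIneq (P : Measure (ℕ → ℝ)) (C : ℝ) : Prop :=
  0 < C ∧
    ∀ (N : ℕ) (g : (Fin N → ℝ) → ℝ) (K : ℝ), 0 ≤ K →
      ConvexOn ℝ Set.univ g →
      (∀ x y : Fin N → ℝ, |g x - g y| ≤ K * Real.sqrt (∑ i, (x i - y i) ^ 2)) →
      Integrable (fun ω => g (fun i => ω (i + 1))) P →
      ∀ t : ℝ, 0 ≤ t →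
        (P {ω | (∫ ω', g (fun i => ω' (i + 1)) ∂P) + t ≤ g (fun i => ω (i + 1))}).toReal
          ≤ C * Real.exp (-t ^ 2 / (C * K ^ 2))

end

open MeasureTheory ProbabilityTheory Filter Finset
open scoped ENNReal NNReal

section PartA

lemma ind_of_true {p : Prop} (hp : p) : ind p = 1 := by simp [ind, hp]

lemma ind_endOK_false (N : ℕ) (ε : ℕ → Bool) : ind (endOK false N ε) = 1 :=
  ind_of_true (by intro h; cases h)

lemma sgn_eq_or (ε : ℕ → Bool) (n : ℕ) : sgn ε n = 1 ∨ sgn ε n = -1 := by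
  unfold sgn; split_ifs <;> simp

lemma pathE_const_mul (N : ℕ) (c : ℝ) (f : (ℕ → Bool) → ℝ) :
    pathE N (fun ε => c * f ε) = c * pathE N f := by
  unfold pathE; rw [← Finset.mul_sum]; ring

lemma pathE_mono (N : ℕ) (f g : (ℕ → Bool) → ℝ) (h : ∀ ε, f ε ≤ g ε) :
    pathE N f ≤ pathE N g := by
  unfold pathE
  exact mul_le_mul_of_nonneg_left (Finset.sum_le_sum fun ε _ => h _) (by positivity)

lemma pathE_pos (N : ℕ) (f : (ℕ → Bool) → ℝ) (h : ∀ ε, 0 < f ε) : 0 < pathE N f := by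
  unfold pathE
  exact mul_pos (by positivity) (Finset.sum_pos (fun ε _ => h _) Finset.univ_nonempty)

lemma pathE_one (N : ℕ) : pathE N (fun _ => 1) = 1 := by
  unfold pathE
  simp only [Finset.sum_const, Finset.card_univ, Fintype.card_fun, Fintype.card_bool,
    Fintype.card_fin, nsmul_eq_mul, mul_one]
  push_cast
  rw [← mul_pow]
  norm_num

/-- The two-parameter partition function through which all convexity is routed:
exponent is linear in `(lam, v)`. -/
noncomputable def Yfun (lam v : ℝ) (N : ℕ) (ω : ℕ → ℝ) : ℝ :=
  pathE N (fun ε => Real.exp ((-(2 * lam)) * (∑ n ∈ lowSet ε N, ω n)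
    + (-(2 * v)) * ((lowSet ε N).card : ℝ)))

lemma Yfun_pos (lam v : ℝ) (N : ℕ) (ω : ℕ → ℝ) : 0 < Yfun lam v N ω :=
  pathE_pos _ _ fun ε => Real.exp_pos _

lemma Yfun_zero (N : ℕ) (ω : ℕ → ℝ) : Yfun 0 0 N ω = 1 := by
  unfold Yfun
  have : ∀ ε : ℕ → Bool, Real.exp ((-(2 * (0:ℝ))) * (∑ n ∈ lowSet ε N, ω n)
      + (-(2 * (0:ℝ))) * ((lowSet ε N).card : ℝ)) = 1 := by
    intro ε; norm_num
  calc pathE N _ = pathE N (fun _ => 1) := by congr 1; funext ε; rw [this]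
  _ = 1 := pathE_one N

lemma Zpart_false_eq_Yfun (lam h : ℝ) (N : ℕ) (ω : ℕ → ℝ) :
    Zpart false lam h N ω = Yfun lam (lam * h) N ω := by
  unfold Zpart Zev Yfun
  congr 1; funext ε
  rw [ind_endOK_false, mul_one]
  unfold weight
  congr 1
  rw [Finset.sum_add_distrib, Finset.sum_const, nsmul_eq_mul]
  ring

lemma card_lowSet_le (ε : ℕ → Bool) (N : ℕ) : (lowSet ε N).card ≤ N := by
  have h1 : (lowSet ε N).card ≤ (Finset.Icc 1 N).card :=
    Finset.card_le_card (Finset.filter_subset _ _)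
  simpa [Nat.card_Icc] using h1

lemma Ztilde_false_eq (lam h : ℝ) (N : ℕ) (ω : ℕ → ℝ) :
    Ztilde false lam h N ω
      = Real.exp (lam * ((∑ n ∈ Finset.Icc 1 N, ω n) + N * h)) * Zpart false lam h N ω := by
  unfold Ztilde Zpart Zev
  rw [← pathE_const_mul]
  congr 1; funext ε
  simp only [ind_endOK_false, mul_one]
  unfold weight
  rw [← Real.exp_add]
  congr 1
  have key : ∑ n ∈ Finset.Icc 1 N, (ω n + h) * (sgn ε n : ℝ)
      = (∑ n ∈ Finset.Icc 1 N, (ω n + h)) - 2 * ∑ n ∈ lowSet ε N, (ω n + h) := by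
    classical
    have hsplit := Finset.sum_filter_add_sum_filter_not (Finset.Icc 1 N)
      (fun n => sgn ε n = -1) (fun n => (ω n + h) * (sgn ε n : ℝ))
    have hsplit2 := Finset.sum_filter_add_sum_filter_not (Finset.Icc 1 N)
      (fun n => sgn ε n = -1) (fun n => (ω n + h))
    have e1 : ∑ n ∈ (Finset.Icc 1 N).filter (fun n => sgn ε n = -1),
        (ω n + h) * (sgn ε n : ℝ)
        = ∑ n ∈ (Finset.Icc 1 N).filter (fun n => sgn ε n = -1), (-(ω n + h)) := by
      refine Finset.sum_congr rfl fun n hn => ?_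
      have := (Finset.mem_filter.mp hn).2
      rw [this]; push_cast; ring
    have e2 : ∑ n ∈ (Finset.Icc 1 N).filter (fun n => ¬ sgn ε n = -1),
        (ω n + h) * (sgn ε n : ℝ)
        = ∑ n ∈ (Finset.Icc 1 N).filter (fun n => ¬ sgn ε n = -1), (ω n + h) := by
      refine Finset.sum_congr rfl fun n hn => ?_
      have h2 := (Finset.mem_filter.mp hn).2
      have h3 := (sgn_eq_or ε n).resolve_right h2
      rw [h3]; push_cast; ring
    have e3 : ∑ n ∈ (Finset.Icc 1 N).filter (fun n => sgn ε n = -1), (-(ω n + h))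
        = - ∑ n ∈ lowSet ε N, (ω n + h) := by
      rw [Finset.sum_neg_distrib]; rfl
    unfold lowSet at *
    rw [e1, e2, e3] at hsplit
    linarith [hsplit, hsplit2]
  have hIcc : ∑ n ∈ Finset.Icc 1 N, (ω n + h)
      = (∑ n ∈ Finset.Icc 1 N, ω n) + N * h := by
    rw [Finset.sum_add_distrib, Finset.sum_const, nsmul_eq_mul, Nat.card_Icc]
    simp
  rw [key, hIcc]
  ring

lemma Yfun_mono (lam v v' : ℝ) (hv : v ≤ v') (N : ℕ) (ω : ℕ → ℝ) :
    Yfun lam v' N ω ≤ Yfun lam v N ω := by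
  refine pathE_mono _ _ _ fun ε => Real.exp_le_exp.mpr ?_
  have : (0:ℝ) ≤ ((lowSet ε N).card : ℝ) := by positivity
  nlinarith

lemma Yfun_lip (lam v v' : ℝ) (N : ℕ) (ω : ℕ → ℝ) :
    Yfun lam v N ω ≤ Real.exp (2 * N * |v' - v|) * Yfun lam v' N ω := by
  unfold Yfun
  rw [← pathE_const_mul]
  refine pathE_mono _ _ _ fun ε => ?_
  rw [← Real.exp_add]
  refine Real.exp_le_exp.mpr ?_
  have hc0 : (0:ℝ) ≤ ((lowSet ε N).card : ℝ) := by positivity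
  have hcN : ((lowSet ε N).card : ℝ) ≤ N := by exact_mod_cast card_lowSet_le ε N
  have habs : (v' - v) * ((lowSet ε N).card : ℝ) ≤ |v' - v| * N := by
    calc (v' - v) * ((lowSet ε N).card : ℝ) ≤ |v' - v| * ((lowSet ε N).card : ℝ) :=
          mul_le_mul_of_nonneg_right (le_abs_self _) hc0
    _ ≤ |v' - v| * N := mul_le_mul_of_nonneg_left hcN (abs_nonneg _)
  nlinarith

lemma sum_exp_holder {ι : Type*} (s : Finset ι) (hs : s.Nonempty) (x y : ι → ℝ)
    (t : ℝ) (h0 : 0 ≤ t) (h1 : t ≤ 1) :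
    ∑ i ∈ s, Real.exp (t * x i + (1 - t) * y i)
      ≤ (∑ i ∈ s, Real.exp (x i)) ^ t * (∑ i ∈ s, Real.exp (y i)) ^ (1 - t) := by
  set A := ∑ i ∈ s, Real.exp (x i) with hA
  set B := ∑ i ∈ s, Real.exp (y i) with hB
  have hApos : 0 < A := Finset.sum_pos (fun i _ => Real.exp_pos _) hs
  have hBpos : 0 < B := Finset.sum_pos (fun i _ => Real.exp_pos _) hs
  have key : ∀ i ∈ s, Real.exp (t * x i + (1 - t) * y i)
      ≤ A ^ t * B ^ (1 - t) * (t * (Real.exp (x i) / A) + (1 - t) * (Real.exp (y i) / B)) := by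
    intro i _
    have h2 : Real.exp (t * x i + (1 - t) * y i)
        = (Real.exp (x i) / A) ^ t * (Real.exp (y i) / B) ^ (1 - t) * (A ^ t * B ^ (1 - t)) := by
      rw [Real.div_rpow (Real.exp_pos _).le hApos.le,
        Real.div_rpow (Real.exp_pos _).le hBpos.le, Real.exp_add,
        mul_comm (t) (x i), mul_comm (1 - t) (y i), Real.exp_mul, Real.exp_mul]
      field_simp
    rw [h2]
    have hg := Real.geom_mean_le_arith_mean2_weighted (w₁ := t) (w₂ := 1 - t)
      (p₁ := Real.exp (x i) / A) (p₂ := Real.exp (y i) / B) h0 (by linarith)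
      (le_of_lt (div_pos (Real.exp_pos _) hApos))
      (le_of_lt (div_pos (Real.exp_pos _) hBpos)) (by ring)
    calc (Real.exp (x i) / A) ^ t * (Real.exp (y i) / B) ^ (1 - t) * (A ^ t * B ^ (1 - t))
        ≤ (t * (Real.exp (x i) / A) + (1 - t) * (Real.exp (y i) / B)) * (A ^ t * B ^ (1 - t)) := by
          apply mul_le_mul_of_nonneg_right hg
          positivity
    _ = _ := by ring
  calc ∑ i ∈ s, Real.exp (t * x i + (1 - t) * y i)
      ≤ ∑ i ∈ s, A ^ t * B ^ (1 - t) * (t * (Real.exp (x i) / A) + (1 - t) * (Real.exp (y i) / B)) :=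
        Finset.sum_le_sum key
  _ = A ^ t * B ^ (1 - t) * (t * (A / A) + (1 - t) * (B / B)) := by
        rw [← Finset.mul_sum]
        congr 1
        rw [Finset.sum_add_distrib]
        rw [← Finset.mul_sum, ← Finset.mul_sum, ← Finset.sum_div, ← Finset.sum_div]
  _ = A ^ t * B ^ (1 - t) := by
        rw [div_self hApos.ne', div_self hBpos.ne']; ring

lemma Yfun_holder (l1 v1 l2 v2 : ℝ) (N : ℕ) (ω : ℕ → ℝ) (t : ℝ) (h0 : 0 ≤ t) (h1 : t ≤ 1) :
    Yfun (t * l1 + (1 - t) * l2) (t * v1 + (1 - t) * v2) N ω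
      ≤ (Yfun l1 v1 N ω) ^ t * (Yfun l2 v2 N ω) ^ (1 - t) := by
  unfold Yfun pathE
  set c : ℝ := (1 / 2 : ℝ) ^ N with hc
  have hcpos : 0 < c := by positivity
  have main := sum_exp_holder (Finset.univ : Finset (Fin N → Bool)) Finset.univ_nonempty
    (fun ε => (-(2 * l1)) * (∑ n ∈ lowSet (extendPath N ε) N, ω n)
      + (-(2 * v1)) * ((lowSet (extendPath N ε) N).card : ℝ))
    (fun ε => (-(2 * l2)) * (∑ n ∈ lowSet (extendPath N ε) N, ω n)
      + (-(2 * v2)) * ((lowSet (extendPath N ε) N).card : ℝ)) t h0 h1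
  have heq : ∀ ε : Fin N → Bool,
      (-(2 * (t * l1 + (1 - t) * l2))) * (∑ n ∈ lowSet (extendPath N ε) N, ω n)
        + (-(2 * (t * v1 + (1 - t) * v2))) * ((lowSet (extendPath N ε) N).card : ℝ)
      = t * ((-(2 * l1)) * (∑ n ∈ lowSet (extendPath N ε) N, ω n)
          + (-(2 * v1)) * ((lowSet (extendPath N ε) N).card : ℝ))
        + (1 - t) * ((-(2 * l2)) * (∑ n ∈ lowSet (extendPath N ε) N, ω n)
          + (-(2 * v2)) * ((lowSet (extendPath N ε) N).card : ℝ)) := by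
    intro ε; ring
  calc c * ∑ ε : Fin N → Bool, Real.exp _
      ≤ c * ((∑ ε : Fin N → Bool, Real.exp ((-(2 * l1)) * (∑ n ∈ lowSet (extendPath N ε) N, ω n)
          + (-(2 * v1)) * ((lowSet (extendPath N ε) N).card : ℝ))) ^ t
        * (∑ ε : Fin N → Bool, Real.exp ((-(2 * l2)) * (∑ n ∈ lowSet (extendPath N ε) N, ω n)
          + (-(2 * v2)) * ((lowSet (extendPath N ε) N).card : ℝ))) ^ (1 - t)) := by
        apply mul_le_mul_of_nonneg_left _ hcpos.le
        calc ∑ ε : Fin N → Bool, Real.exp _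
            = ∑ ε : Fin N → Bool, Real.exp (t * _ + (1 - t) * _) := by
              refine Finset.sum_congr rfl fun ε _ => ?_
              rw [heq ε]
        _ ≤ _ := main
  _ = _ := by
        have hcc : c = c ^ t * c ^ (1 - t) := by
          rw [← Real.rpow_add hcpos]; norm_num
        rw [Real.mul_rpow hcpos.le (Finset.sum_nonneg fun i _ => (Real.exp_pos _).le),
          Real.mul_rpow hcpos.le (Finset.sum_nonneg fun i _ => (Real.exp_pos _).le)]
        nth_rewrite 1 [hcc]
        ring

end PartA
section PartC

open DyckStep

lemma walkPos_succ (ε : ℕ → Bool) (n : ℕ) :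
    walkPos ε (n + 1) = walkPos ε n + (if ε n then (1 : ℤ) else -1) := by
  unfold walkPos; rw [Finset.sum_range_succ]

lemma sgn_eq_one_of_nonneg (ε : ℕ → Bool) (N : ℕ) (hnn : ∀ n ≤ N, 0 ≤ walkPos ε n)
    (n : ℕ) (h1 : 1 ≤ n) (hn : n ≤ N) : sgn ε n = 1 := by
  obtain ⟨m, rfl⟩ : ∃ m, n = m + 1 := ⟨n - 1, by omega⟩
  have hstep := walkPos_succ ε m
  have hm : 0 ≤ walkPos ε m := hnn m (by omega)
  have hn' : 0 ≤ walkPos ε (m + 1) := hnn _ hn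
  unfold sgn
  split_ifs with hpos hneg hprev
  · rfl
  · omega
  · rfl
  · exfalso
    have hz : walkPos ε (m + 1) = 0 := by omega
    simp only [Nat.add_sub_cancel] at hprev
    split_ifs at hstep <;> omega

lemma lowSet_eq_empty_of_nonneg (ε : ℕ → Bool) (N : ℕ)
    (hnn : ∀ n ≤ N, 0 ≤ walkPos ε n) : lowSet ε N = ∅ := by
  unfold lowSet
  rw [Finset.filter_eq_empty_iff]
  intro n hn
  rw [Finset.mem_Icc] at hn
  rw [sgn_eq_one_of_nonneg ε N hnn n hn.1 hn.2]
  decide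

/-- The infinite step sequence associated with a list of Dyck steps. -/
def listSteps (l : List DyckStep) : ℕ → Bool := fun j => decide (l.getD j D = U)

lemma walkPos_listSteps (l : List DyckStep) :
    ∀ n, n ≤ l.length →
      walkPos (listSteps l) n = ((l.take n).count U : ℤ) - ((l.take n).count D) := by
  intro n
  induction n with
  | zero => intro _; simp [walkPos]
  | succ m ih =>
    intro hm
    have hmlen : m < l.length := by omega
    rw [walkPos_succ, ih (by omega)]
    have htake : l.take (m + 1) = l.take m ++ [l[m]] := by
      rw [List.take_succ, List.getElem?_eq_getElem hmlen]
      rfl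
    rw [htake, List.count_append, List.count_append]
    have hsl : listSteps l m = decide (l[m] = U) := by
      unfold listSteps
      rw [List.getD_eq_getElem l D hmlen]
    rcases l[m].dichotomy with hU | hD
    · rw [hsl, hU]
      simp only [decide_eq_true_eq, if_true, List.count_singleton]
      simp
      omega
    · rw [hsl, hD]
      simp
      omega
end PartC
section PartC2

open DyckStep

lemma extendPath_listSteps (k : ℕ) (l : List DyckStep) (hlen : l.length = 2 * k) :
    extendPath (2 * k) (fun i : Fin (2 * k) => listSteps l i) = listSteps l := by
  funext j
  unfold extendPath
  split_ifs with hj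
  · rfl
  · unfold listSteps
    rw [List.getD_eq_default]
    · simp
    · omega

lemma lowSet_listSteps_empty (k : ℕ) (p : DyckWord) (hp : p.semilength = k) :
    lowSet (extendPath (2 * k) (fun i : Fin (2 * k) => listSteps p.toList i)) (2 * k) = ∅ := by
  have hlen : p.toList.length = 2 * k := by
    rw [← DyckWord.two_mul_semilength_eq_length, hp]
  rw [extendPath_listSteps k p.toList hlen]
  apply lowSet_eq_empty_of_nonneg
  intro n hn
  rw [walkPos_listSteps p.toList n (by omega)]
  have := p.count_D_le_count_U n
  omega

lemma catalan_le_card_good (k : ℕ) :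
    catalan k ≤ (Finset.univ.filter
      (fun ε : Fin (2 * k) → Bool =>
        lowSet (extendPath (2 * k) ε) (2 * k) = ∅)).card := by
  classical
  rw [← DyckWord.card_dyckWord_semilength_eq_catalan]
  have := Fintype.card_subtype (p := fun ε : Fin (2 * k) → Bool =>
    lowSet (extendPath (2 * k) ε) (2 * k) = ∅)
  rw [← this]
  refine Fintype.card_le_of_injective
    (fun p => ⟨fun i => listSteps p.1.toList i, lowSet_listSteps_empty k p.1 p.2⟩) ?_
  rintro ⟨p, hp⟩ ⟨q, hq⟩ hpq
  have hfun : ∀ i : Fin (2 * k), listSteps p.toList i = listSteps q.toList i := by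
    intro i
    exact congrFun (congrArg Subtype.val hpq) i
  have hlp : p.toList.length = 2 * k := by
    rw [← DyckWord.two_mul_semilength_eq_length, hp]
  have hlq : q.toList.length = 2 * k := by
    rw [← DyckWord.two_mul_semilength_eq_length, hq]
  have hlist : p.toList = q.toList := by
    apply List.ext_getElem (by omega)
    intro i h1 h2
    have hi := hfun ⟨i, by omega⟩
    unfold listSteps at hi
    rw [List.getD_eq_getElem p.toList D h1, List.getD_eq_getElem q.toList D h2] at hi
    simp only [decide_eq_decide] at hi
    rcases (p.toList[i]).dichotomy with h | h <;> rcases (q.toList[i]).dichotomy with h' | h' <;>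
      simp [h, h'] at hi ⊢
  apply Subtype.ext
  exact DyckWord.ext hlist

lemma Yfun_lower (lam v : ℝ) (k : ℕ) (hk : 1 ≤ k) (ω : ℕ → ℝ) :
    (1 : ℝ) / ((2 * k) * (k + 1)) ≤ Yfun lam v (2 * k) ω := by
  classical
  have hcat : (4 : ℝ) ^ k ≤ ((2 * k) * (k + 1) : ℝ) * catalan k := by
    have h1 : 4 ^ k ≤ 2 * k * Nat.centralBinom k :=
      Nat.four_pow_le_two_mul_self_mul_centralBinom k hk
    have h2 : Nat.centralBinom k = (k + 1) * catalan k := by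
      rw [catalan_eq_centralBinom_div, Nat.mul_div_cancel' k.succ_dvd_centralBinom]
    have : 4 ^ k ≤ 2 * k * ((k + 1) * catalan k) := by rw [← h2]; exact h1
    calc (4 : ℝ) ^ k = ((4 ^ k : ℕ) : ℝ) := by push_cast; ring
    _ ≤ ((2 * k * ((k + 1) * catalan k) : ℕ) : ℝ) := by exact_mod_cast this
    _ = ((2 * k) * (k + 1) : ℝ) * catalan k := by push_cast; ring
  set good := Finset.univ.filter
    (fun ε : Fin (2 * k) → Bool => lowSet (extendPath (2 * k) ε) (2 * k) = ∅) with hgood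
  have hYlow : ((1 : ℝ) / 2) ^ (2 * k) * good.card ≤ Yfun lam v (2 * k) ω := by
    unfold Yfun pathE
    refine mul_le_mul_of_nonneg_left ?_ (by positivity)
    calc (good.card : ℝ) = ∑ ε ∈ good, (1 : ℝ) := by rw [Finset.sum_const]; simp
    _ = ∑ ε ∈ good, Real.exp ((-(2 * lam)) * (∑ n ∈ lowSet (extendPath (2 * k) ε) (2 * k), ω n)
          + (-(2 * v)) * ((lowSet (extendPath (2 * k) ε) (2 * k)).card : ℝ)) := by
        refine Finset.sum_congr rfl fun ε hε => ?_
        have hempty := (Finset.mem_filter.mp hε).2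
        rw [hempty]
        simp
    _ ≤ ∑ ε : Fin (2 * k) → Bool,
          Real.exp ((-(2 * lam)) * (∑ n ∈ lowSet (extendPath (2 * k) ε) (2 * k), ω n)
          + (-(2 * v)) * ((lowSet (extendPath (2 * k) ε) (2 * k)).card : ℝ)) := by
        refine Finset.sum_le_sum_of_subset_of_nonneg (Finset.filter_subset _ _) ?_
        intro i _ _
        exact (Real.exp_pos _).le
  have hcard : (catalan k : ℝ) ≤ good.card := by exact_mod_cast catalan_le_card_good k
  have hkpos : (0:ℝ) < (2 * k) * (k + 1) := by positivity
  have h4 : ((1:ℝ)/2) ^ (2 * k) * (4:ℝ)^k = 1 := by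
    rw [pow_mul]
    norm_num
    rw [← mul_pow]
    norm_num
  calc (1 : ℝ) / ((2 * k) * (k + 1))
      = ((1:ℝ)/2) ^ (2 * k) * ((4:ℝ)^k / ((2 * k) * (k + 1))) := by
        rw [mul_div_assoc'] ; rw [h4]
  _ ≤ ((1:ℝ)/2) ^ (2 * k) * (catalan k : ℝ) := by
        refine mul_le_mul_of_nonneg_left ?_ (by positivity)
        rw [div_le_iff₀ hkpos]
        linarith [hcat]
  _ ≤ ((1:ℝ)/2) ^ (2 * k) * good.card := by
        refine mul_le_mul_of_nonneg_left hcard (by positivity)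
  _ ≤ Yfun lam v (2 * k) ω := hYlow

end PartC2
open scoped Topology

section PartD

variable {mu : Measure ℝ} {P : Measure (ℕ → ℝ)}

lemma integrable_exp_coord (hsetup : BasicSetup mu P) (c : ℝ)
    (hc : Integrable (fun x => Real.exp (c * x)) mu) (n : ℕ) :
    Integrable (fun ω : ℕ → ℝ => Real.exp (c * ω n)) P := by
  obtain ⟨-, -, -, -, -, hmarg, -⟩ := hsetup
  have := (integrable_map_measure
    (f := fun ω : ℕ → ℝ => ω n) (g := fun x => Real.exp (c * x))
    (Real.continuous_exp.comp (continuous_const.mul continuous_id)).aestronglyMeasurable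
    (measurable_pi_apply n).aemeasurable).mp (by rw [hmarg n]; exact hc)
  exact this

lemma integrable_id_mu (hsetup : BasicSetup mu P) : Integrable (fun x : ℝ => x) mu := by
  obtain ⟨-, -, -, -, ⟨t₀, ht₀, hexp⟩, -, -⟩ := hsetup
  have hb : ∀ x : ℝ, ‖x‖ ≤ ‖(1 / t₀) * (Real.exp (t₀ * x) + Real.exp (-t₀ * x))‖ := by
    intro x
    have h1 : t₀ * |x| ≤ Real.exp (t₀ * |x|) := by
      nlinarith [Real.add_one_le_exp (t₀ * |x|)]
    have h2 : Real.exp (t₀ * |x|) ≤ Real.exp (t₀ * x) + Real.exp (-t₀ * x) := by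
      rcases le_or_gt 0 x with hx | hx
      · rw [abs_of_nonneg hx]
        nlinarith [Real.exp_pos (-t₀ * x)]
      · rw [abs_of_neg hx]
        have : t₀ * -x = -t₀ * x := by ring
        rw [this]
        nlinarith [Real.exp_pos (t₀ * x)]
    rw [Real.norm_eq_abs, Real.norm_eq_abs]
    have h3 : |x| ≤ (1 / t₀) * (Real.exp (t₀ * x) + Real.exp (-t₀ * x)) := by
      rw [one_div, inv_mul_eq_div, le_div_iff₀ ht₀]
      nlinarith
    exact le_trans h3 (le_abs_self _)
  have hint : Integrable (fun x => (1 / t₀) * (Real.exp (t₀ * x) + Real.exp (-t₀ * x))) mu :=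
    ((hexp t₀ (by rw [abs_of_pos ht₀])).add
      (hexp (-t₀) (by rw [abs_neg, abs_of_pos ht₀]))).const_mul _
  exact hint.mono measurable_id.aestronglyMeasurable (Filter.Eventually.of_forall hb)

lemma integral_id_mu (hsetup : BasicSetup mu P) : ∫ x, x ∂mu = 0 := by
  have hint := integrable_id_mu hsetup
  obtain ⟨-, -, hsymm, -, -, -, -⟩ := hsetup
  have h1 : ∫ x, x ∂mu = ∫ x, x ∂(mu.map fun y => -y) := by rw [hsymm]
  have h2 : ∫ x, x ∂(mu.map fun y : ℝ => -y) = ∫ x, -x ∂mu :=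
    integral_map measurable_neg.aemeasurable measurable_id.aestronglyMeasurable
  rw [h2, integral_neg] at h1
  linarith

lemma integrable_coord (hsetup : BasicSetup mu P) (n : ℕ) :
    Integrable (fun ω : ℕ → ℝ => ω n) P := by
  have hmarg := hsetup.2.2.2.2.2.1
  exact (integrable_map_measure (f := fun ω : ℕ → ℝ => ω n) (g := fun x => x)
    measurable_id.aestronglyMeasurable
    (measurable_pi_apply n).aemeasurable).mp (by rw [hmarg n]; exact integrable_id_mu hsetup)

lemma integral_coord (hsetup : BasicSetup mu P) (n : ℕ) :
    ∫ ω, ω n ∂P = 0 := by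
  have hmarg := hsetup.2.2.2.2.2.1
  have h2 : ∫ x, x ∂(P.map fun ω : ℕ → ℝ => ω n) = ∫ ω, ω n ∂P :=
    integral_map (measurable_pi_apply n).aemeasurable measurable_id.aestronglyMeasurable
  rw [← h2, hmarg n, integral_id_mu hsetup]

lemma slln_icc (hsetup : BasicSetup mu P) :
    ∀ᵐ ω ∂P, Tendsto (fun N : ℕ => (∑ n ∈ Finset.Icc 1 N, ω n) / (N : ℝ)) atTop (𝓝 0) := by
  have hindep := hsetup.2.2.2.2.2.2
  have h := ProbabilityTheory.strong_law_ae_real (μ := P) (fun i (ω : ℕ → ℝ) => ω (i + 1))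
    (integrable_coord hsetup 1)
    (fun i j hij => hindep.indepFun (show i + 1 ≠ j + 1 by omega))
    (fun i => ⟨(measurable_pi_apply _).aemeasurable, (measurable_pi_apply _).aemeasurable,
      by rw [hsetup.2.2.2.2.2.1, hsetup.2.2.2.2.2.1]⟩)
  rw [integral_coord hsetup 1] at h
  filter_upwards [h] with ω hω
  have heq : ∀ N : ℕ, ∑ n ∈ Finset.Icc 1 N, ω n = ∑ i ∈ Finset.range N, ω (i + 1) := by
    intro N
    rw [← Finset.Ico_add_one_right_eq_Icc, Finset.sum_Ico_eq_sum_range]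
    norm_num
    exact Finset.sum_congr rfl fun i _ => by rw [Nat.add_comm]
  refine hω.congr fun N => ?_
  rw [heq]

end PartD
section PartD2

open scoped Topology

variable {mu : Measure ℝ} {P : Measure (ℕ → ℝ)} {F : ℝ → ℝ → ℝ}

/-- Abbreviation for the free-energy hypothesis. -/
def HFhyp (P : Measure (ℕ → ℝ)) (F : ℝ → ℝ → ℝ) : Prop :=
  ∀ lam h : ℝ, 0 ≤ lam → 0 ≤ h →
    ∀ᵐ ω ∂P, Tendsto (fun k : ℕ => Real.log (Ztilde false lam h (2 * k) ω) / (2 * k))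
      atTop (nhds (F lam h))

lemma tendsto_two_mul_atTop : Tendsto (fun k : ℕ => 2 * k) atTop atTop :=
  tendsto_atTop_atTop.mpr fun b => ⟨b, fun a ha => by omega⟩

lemma ae_tendsto_logY (hsetup : BasicSetup mu P) (hF : HFhyp P F)
    (lam h : ℝ) (hlam : 0 ≤ lam) (hh : 0 ≤ h) :
    ∀ᵐ ω ∂P, Tendsto (fun k : ℕ => Real.log (Yfun lam (lam * h) (2 * k) ω) / (2 * k))
      atTop (𝓝 (F lam h - lam * h)) := by
  filter_upwards [hF lam h hlam hh, slln_icc hsetup] with ω h1 h2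
  have h2' : Tendsto (fun k : ℕ => (∑ n ∈ Finset.Icc 1 (2 * k), ω n) / ((2 * k : ℕ) : ℝ))
      atTop (𝓝 0) := h2.comp tendsto_two_mul_atTop
  have hmain : Tendsto (fun k : ℕ =>
      Real.log (Ztilde false lam h (2 * k) ω) / (2 * k)
        - lam * ((∑ n ∈ Finset.Icc 1 (2 * k), ω n) / ((2 * k : ℕ) : ℝ)) - lam * h)
      atTop (𝓝 (F lam h - lam * 0 - lam * h)) :=
    (h1.sub (h2'.const_mul lam)).sub tendsto_const_nhds
  rw [show F lam h - lam * 0 - lam * h = F lam h - lam * h by ring] at hmain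
  refine hmain.congr' ?_
  filter_upwards [Filter.eventually_ge_atTop 1] with k hk
  have h2k : ((2 * k : ℕ) : ℝ) ≠ 0 := by positivity
  have hlog : Real.log (Ztilde false lam h (2 * k) ω)
      = lam * ((∑ n ∈ Finset.Icc 1 (2 * k), ω n) + ((2 * k : ℕ) : ℝ) * h)
        + Real.log (Yfun lam (lam * h) (2 * k) ω) := by
    rw [Ztilde_false_eq, Zpart_false_eq_Yfun,
      Real.log_mul (Real.exp_ne_zero _) (Yfun_pos _ _ _ _).ne', Real.log_exp]
  rw [hlog]
  field_simp
  push_cast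
  ring

/-- Positivity of one-point ae filters. -/
lemma ae_nebot (hsetup : BasicSetup mu P) : (MeasureTheory.ae P).NeBot := by
  haveI : IsProbabilityMeasure P := hsetup.2.1
  exact MeasureTheory.ae_neBot.mpr (IsProbabilityMeasure.ne_zero P)

lemma tendsto_log_quad : Tendsto
    (fun k : ℕ => -(Real.log ((2 * k : ℝ) * ((k : ℝ) + 1)) / ((2 * k : ℕ) : ℝ)))
    atTop (𝓝 0) := by
  have hlogdiv : Tendsto (fun x : ℝ => Real.log x / x) atTop (𝓝 0) :=
    Real.isLittleO_log_id_atTop.tendsto_div_nhds_zero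
  have hnat : Tendsto (fun k : ℕ => (k : ℝ)) atTop atTop := tendsto_natCast_atTop_atTop
  have h2k : Tendsto (fun k : ℕ => (2 : ℝ) * k) atTop atTop :=
    hnat.const_mul_atTop (by norm_num)
  have hk1 : Tendsto (fun k : ℕ => (k : ℝ) + 1) atTop atTop :=
    tendsto_atTop_add_const_right _ 1 hnat
  have t1 : Tendsto (fun k : ℕ => Real.log ((2 : ℝ) * k) / ((2 : ℝ) * k)) atTop (𝓝 0) :=
    hlogdiv.comp h2k
  have t2 : Tendsto (fun k : ℕ => Real.log ((k : ℝ) + 1) / ((k : ℝ) + 1)) atTop (𝓝 0) :=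
    hlogdiv.comp hk1
  have t3 : Tendsto (fun k : ℕ => ((k : ℝ) + 1) / ((2 : ℝ) * k)) atTop (𝓝 (1 / 2)) := by
    have hinv : Tendsto (fun k : ℕ => 1 / (k : ℝ)) atTop (𝓝 0) :=
      tendsto_one_div_atTop_nhds_zero_nat
    have := (tendsto_const_nhds (x := (1 / 2 : ℝ)) (f := atTop)).add (hinv.const_mul (1 / 2))
    rw [mul_zero, add_zero] at this
    refine this.congr' ?_
    filter_upwards [Filter.eventually_ge_atTop 1] with k hk
    have hk0 : (0:ℝ) < (k : ℝ) := by exact_mod_cast hk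
    field_simp
  have tmain : Tendsto (fun k : ℕ =>
      -(Real.log ((2 : ℝ) * k) / ((2 : ℝ) * k)
        + (Real.log ((k : ℝ) + 1) / ((k : ℝ) + 1)) * (((k : ℝ) + 1) / ((2 : ℝ) * k))))
      atTop (𝓝 0) := by
    have := (t1.add (t2.mul t3)).neg
    simpa using this
  refine tmain.congr' ?_
  filter_upwards [Filter.eventually_ge_atTop 1] with k hk
  have hk0 : (0 : ℝ) < (k : ℝ) := by exact_mod_cast hk
  have h2k0 : (0 : ℝ) < 2 * (k : ℝ) := by linarith
  have hk10 : (0 : ℝ) < (k : ℝ) + 1 := by linarith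
  have hcast : ((2 * k : ℕ) : ℝ) = 2 * (k : ℝ) := by push_cast; ring
  rw [hcast, Real.log_mul h2k0.ne' hk10.ne']
  field_simp

lemma g_nonneg (hsetup : BasicSetup mu P) (hF : HFhyp P F)
    (lam h : ℝ) (hlam : 0 ≤ lam) (hh : 0 ≤ h) : 0 ≤ F lam h - lam * h := by
  haveI := ae_nebot hsetup
  obtain ⟨ω, hω⟩ := (ae_tendsto_logY hsetup hF lam h hlam hh).exists
  refine le_of_tendsto_of_tendsto tendsto_log_quad hω ?_
  filter_upwards [Filter.eventually_ge_atTop 1] with k hk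
  have hk0 : (0 : ℝ) < (k : ℝ) := by exact_mod_cast hk
  have hlow := Yfun_lower lam (lam * h) k hk ω
  have hq : (0 : ℝ) < (2 * (k : ℝ)) * ((k : ℝ) + 1) := by positivity
  have hYpos := Yfun_pos lam (lam * h) (2 * k) ω
  have hloglow : -(Real.log ((2 * (k : ℝ)) * ((k : ℝ) + 1)))
      ≤ Real.log (Yfun lam (lam * h) (2 * k) ω) := by
    have h1 : Real.log (1 / ((2 * (k : ℝ)) * ((k : ℝ) + 1)))
        ≤ Real.log (Yfun lam (lam * h) (2 * k) ω) := by
      apply Real.log_le_log (by positivity)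
      convert hlow using 3
    rw [Real.log_div one_ne_zero hq.ne', Real.log_one] at h1
    linarith
  have hcast : ((2 * k : ℕ) : ℝ) = 2 * (k : ℝ) := by push_cast; ring
  rw [hcast, ← neg_div]
  exact (div_le_div_iff_of_pos_right (by positivity)).mpr hloglow

end PartD2
section PartD3

open scoped Topology

variable {mu : Measure ℝ} {P : Measure (ℕ → ℝ)} {F : ℝ → ℝ → ℝ}

lemma g_antitone (hsetup : BasicSetup mu P) (hF : HFhyp P F) (lam h h' : ℝ)
    (hlam : 0 ≤ lam) (hh : 0 ≤ h) (hhh : h ≤ h') :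
    F lam h' - lam * h' ≤ F lam h - lam * h := by
  haveI := ae_nebot hsetup
  obtain ⟨ω, h1, h2⟩ := ((ae_tendsto_logY hsetup hF lam h hlam hh).and
    (ae_tendsto_logY hsetup hF lam h' hlam (le_trans hh hhh))).exists
  refine le_of_tendsto_of_tendsto h2 h1 ?_
  filter_upwards [Filter.eventually_ge_atTop 1] with k hk
  have hden : (0 : ℝ) < (2 * (k : ℕ) : ℝ) := by positivity
  refine (div_le_div_iff_of_pos_right hden).mpr ?_
  refine Real.log_le_log (Yfun_pos _ _ _ _) ?_
  exact Yfun_mono lam (lam * h) (lam * h') (mul_le_mul_of_nonneg_left hhh hlam) _ ω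

lemma g_lip (hsetup : BasicSetup mu P) (hF : HFhyp P F) (lam h h' : ℝ)
    (hlam : 0 ≤ lam) (hh : 0 ≤ h) (hhh : h ≤ h') :
    F lam h - lam * h ≤ 2 * lam * (h' - h) + (F lam h' - lam * h') := by
  haveI := ae_nebot hsetup
  obtain ⟨ω, h1, h2⟩ := ((ae_tendsto_logY hsetup hF lam h hlam hh).and
    (ae_tendsto_logY hsetup hF lam h' hlam (le_trans hh hhh))).exists
  refine le_of_tendsto_of_tendsto h1 (tendsto_const_nhds.add h2) ?_
  filter_upwards [Filter.eventually_ge_atTop 1] with k hk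
  have hden : (0 : ℝ) < (2 * (k : ℕ) : ℝ) := by positivity
  have hlip := Yfun_lip lam (lam * h) (lam * h') (2 * k) ω
  have habs : |lam * h' - lam * h| = lam * (h' - h) := by
    rw [show lam * h' - lam * h = lam * (h' - h) by ring]
    exact abs_of_nonneg (mul_nonneg hlam (by linarith))
  rw [habs] at hlip
  have hlog : Real.log (Yfun lam (lam * h) (2 * k) ω)
      ≤ 2 * (2 * k : ℕ) * (lam * (h' - h)) + Real.log (Yfun lam (lam * h') (2 * k) ω) := by
    have := Real.log_le_log (Yfun_pos lam (lam * h) (2 * k) ω) hlip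
    rwa [Real.log_mul (Real.exp_ne_zero _) (Yfun_pos _ _ _ _).ne', Real.log_exp] at this
  have step : Real.log (Yfun lam (lam * h) (2 * k) ω) / (2 * (k : ℕ) : ℝ)
      ≤ (2 * (2 * k : ℕ) * (lam * (h' - h)) + Real.log (Yfun lam (lam * h') (2 * k) ω))
          / (2 * (k : ℕ) : ℝ) := (div_le_div_iff_of_pos_right hden).mpr hlog
  calc Real.log (Yfun lam (lam * h) (2 * k) ω) / (2 * (k : ℕ) : ℝ) ≤ _ := step
  _ = 2 * lam * (h' - h) + Real.log (Yfun lam (lam * h') (2 * k) ω) / (2 * (k : ℕ) : ℝ) := by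
      push_cast
      field_simp

lemma g_mono_lam (hsetup : BasicSetup mu P) (hF : HFhyp P F) (lam1 lam2 h : ℝ)
    (hl1 : 0 ≤ lam1) (hl12 : lam1 ≤ lam2) (hh : 0 ≤ h) :
    F lam1 h - lam1 * h ≤ F lam2 h - lam2 * h := by
  rcases eq_or_lt_of_le (le_trans hl1 hl12) with hl2 | hl2
  · have h12 : lam1 = lam2 := le_antisymm hl12 (hl2 ▸ hl1)
    rw [h12]
  haveI := ae_nebot hsetup
  set t := lam1 / lam2 with ht
  have ht0 : 0 ≤ t := div_nonneg hl1 hl2.le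
  have ht1 : t ≤ 1 := (div_le_one hl2).mpr hl12
  obtain ⟨ω, h1, h2⟩ := ((ae_tendsto_logY hsetup hF lam1 h hl1 hh).and
    (ae_tendsto_logY hsetup hF lam2 h (le_trans hl1 hl12) hh)).exists
  have hle : F lam1 h - lam1 * h ≤ t * (F lam2 h - lam2 * h) := by
    refine le_of_tendsto_of_tendsto h1 (h2.const_mul t) ?_
    filter_upwards [Filter.eventually_ge_atTop 1] with k hk
    have hden : (0 : ℝ) < (2 * (k : ℕ) : ℝ) := by positivity
    have harg1 : t * lam2 + (1 - t) * 0 = lam1 := by rw [ht]; field_simp; ring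
    have harg2 : t * (lam2 * h) + (1 - t) * 0 = lam1 * h := by rw [ht]; field_simp; ring
    have hhold := Yfun_holder lam2 (lam2 * h) 0 0 (2 * k) ω t ht0 ht1
    rw [harg1, harg2, Yfun_zero] at hhold
    rw [Real.one_rpow, mul_one] at hhold
    have hlog : Real.log (Yfun lam1 (lam1 * h) (2 * k) ω)
        ≤ t * Real.log (Yfun lam2 (lam2 * h) (2 * k) ω) := by
      have := Real.log_le_log (Yfun_pos lam1 (lam1 * h) (2 * k) ω) hhold
      rwa [Real.log_rpow (Yfun_pos _ _ _ _)] at this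
    calc Real.log (Yfun lam1 (lam1 * h) (2 * k) ω) / (2 * (k : ℕ) : ℝ)
        ≤ t * Real.log (Yfun lam2 (lam2 * h) (2 * k) ω) / (2 * (k : ℕ) : ℝ) :=
          (div_le_div_iff_of_pos_right hden).mpr hlog
    _ = t * (Real.log (Yfun lam2 (lam2 * h) (2 * k) ω) / (2 * (k : ℕ) : ℝ)) := by ring
  have hg2 := g_nonneg hsetup hF lam2 h (le_trans hl1 hl12) hh
  nlinarith

lemma g_convex_comb (hsetup : BasicSetup mu P) (hF : HFhyp P F) (lam1 lam2 v1 v2 t : ℝ)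
    (hl1 : 0 < lam1) (hl2 : 0 < lam2) (hv1 : 0 ≤ v1) (hv2 : 0 ≤ v2)
    (ht0 : 0 ≤ t) (ht1 : t ≤ 1)
    (hL : 0 < t * lam1 + (1 - t) * lam2) :
    F (t * lam1 + (1 - t) * lam2) ((t * v1 + (1 - t) * v2) / (t * lam1 + (1 - t) * lam2))
        - (t * v1 + (1 - t) * v2)
      ≤ t * (F lam1 (v1 / lam1) - v1) + (1 - t) * (F lam2 (v2 / lam2) - v2) := by
  haveI := ae_nebot hsetup
  set L := t * lam1 + (1 - t) * lam2 with hLdef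
  set V := t * v1 + (1 - t) * v2 with hVdef
  have hV : 0 ≤ V := add_nonneg (mul_nonneg ht0 hv1) (mul_nonneg (by linarith) hv2)
  have e1 : lam1 * (v1 / lam1) = v1 := by field_simp
  have e2 : lam2 * (v2 / lam2) = v2 := by field_simp
  have eL : L * (V / L) = V := by
    rw [mul_div_assoc']
    exact mul_div_cancel_left₀ V hL.ne'
  have a1 := ae_tendsto_logY hsetup hF lam1 (v1 / lam1) hl1.le (div_nonneg hv1 hl1.le)
  have a2 := ae_tendsto_logY hsetup hF lam2 (v2 / lam2) hl2.le (div_nonneg hv2 hl2.le)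
  have aL := ae_tendsto_logY hsetup hF L (V / L) hL.le (div_nonneg hV hL.le)
  rw [e1] at a1; rw [e2] at a2; rw [eL] at aL
  obtain ⟨ω, hω1, hω2, hωL⟩ := (a1.and (a2.and aL)).exists
  have hlim : Tendsto (fun k : ℕ =>
      t * (Real.log (Yfun lam1 v1 (2 * k) ω) / (2 * (k : ℕ) : ℝ))
        + (1 - t) * (Real.log (Yfun lam2 v2 (2 * k) ω) / (2 * (k : ℕ) : ℝ))) atTop
      (𝓝 (t * (F lam1 (v1 / lam1) - v1) + (1 - t) * (F lam2 (v2 / lam2) - v2))) :=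
    (hω1.const_mul t).add (hω2.const_mul (1 - t))
  refine le_of_tendsto_of_tendsto hωL hlim ?_
  filter_upwards [Filter.eventually_ge_atTop 1] with k hk
  have hden : (0 : ℝ) < (2 * (k : ℕ) : ℝ) := by positivity
  have hhold := Yfun_holder lam1 v1 lam2 v2 (2 * k) ω t ht0 ht1
  have hY1 := Yfun_pos lam1 v1 (2 * k) ω
  have hY2 := Yfun_pos lam2 v2 (2 * k) ω
  have hlog : Real.log (Yfun L V (2 * k) ω)
      ≤ t * Real.log (Yfun lam1 v1 (2 * k) ω) + (1 - t) * Real.log (Yfun lam2 v2 (2 * k) ω) := by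
    have hcomp := Real.log_le_log (Yfun_pos L V (2 * k) ω) hhold
    rwa [Real.log_mul (Real.rpow_pos_of_pos hY1 t).ne' (Real.rpow_pos_of_pos hY2 (1 - t)).ne',
      Real.log_rpow hY1, Real.log_rpow hY2] at hcomp
  calc Real.log (Yfun L V (2 * k) ω) / (2 * (k : ℕ) : ℝ)
      ≤ (t * Real.log (Yfun lam1 v1 (2 * k) ω)
          + (1 - t) * Real.log (Yfun lam2 v2 (2 * k) ω)) / (2 * (k : ℕ) : ℝ) :=
        (div_le_div_iff_of_pos_right hden).mpr hlog
  _ = _ := by ring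

lemma F_zero (hsetup : BasicSetup mu P) (hF : HFhyp P F) (h : ℝ) (hh : 0 ≤ h) :
    F 0 h = 0 := by
  haveI := ae_nebot hsetup
  obtain ⟨ω, hω⟩ := (hF 0 h le_rfl hh).exists
  have hconst : ∀ k : ℕ, Real.log (Ztilde false 0 h (2 * k) ω) / (2 * (k : ℕ) : ℝ) = 0 := by
    intro k
    have : Ztilde false 0 h (2 * k) ω = 1 := by
      rw [Ztilde_false_eq, Zpart_false_eq_Yfun, zero_mul, Real.exp_zero, one_mul,
        zero_mul, Yfun_zero]
    rw [this, Real.log_one, zero_div]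
  have : Tendsto (fun k : ℕ => Real.log (Ztilde false 0 h (2 * k) ω) / (2 * (k : ℕ) : ℝ))
      atTop (𝓝 0) := by
    refine tendsto_const_nhds.congr fun k => ?_
    rw [hconst k]
  exact tendsto_nhds_unique hω this

end PartD3
section PartE

open scoped Topology

variable {mu : Measure ℝ} {P : Measure (ℕ → ℝ)} {F : ℝ → ℝ → ℝ}

lemma exp_quad (u : ℝ) : Real.exp u ≤ 1 + u + u ^ 2 * Real.exp |u| := by
  rcases le_or_gt 0 u with hu | hu
  · rw [abs_of_nonneg hu]
    rcases le_or_gt 1 u with h1 | h1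
    · have hsq : (0:ℝ) ≤ (u ^ 2 - 1) * Real.exp u :=
        mul_nonneg (by nlinarith) (Real.exp_pos u).le
      nlinarith [Real.exp_pos u]
    · have hkey : (1 - u) * Real.exp u ≤ 1 := by
        have h2 : 1 - u ≤ Real.exp (-u) := by nlinarith [Real.add_one_le_exp (-u)]
        have h3 : (1 - u) * Real.exp u ≤ Real.exp (-u) * Real.exp u :=
          mul_le_mul_of_nonneg_right h2 (Real.exp_pos u).le
        rwa [← Real.exp_add, neg_add_cancel, Real.exp_zero] at h3
      nlinarith [Real.exp_pos u]
  · rw [abs_of_neg hu]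
    have hab : Real.exp u * Real.exp (-u) = 1 := by
      rw [← Real.exp_add, add_neg_cancel, Real.exp_zero]
    nlinarith [Real.add_one_le_exp u, Real.add_one_le_exp (-u), Real.exp_pos u,
      Real.exp_pos (-u), sq_nonneg u, sq_nonneg (u * Real.exp (-u))]

lemma sq_le_exp_abs (a x : ℝ) (ha : 0 < a) : x ^ 2 ≤ 4 / a ^ 2 * Real.exp (a * |x|) := by
  have h1 : a * |x| / 2 ≤ Real.exp (a * |x| / 2) := by
    nlinarith [Real.add_one_le_exp (a * |x| / 2), abs_nonneg x]
  have h2 : (a * |x| / 2) ^ 2 ≤ Real.exp (a * |x| / 2) ^ 2 := by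
    have h0 : 0 ≤ a * |x| / 2 := by positivity
    nlinarith [Real.exp_pos (a * |x| / 2)]
  have h3 : Real.exp (a * |x| / 2) ^ 2 = Real.exp (a * |x|) := by
    rw [sq, ← Real.exp_add]
    congr 1
    ring
  rw [h3] at h2
  have h5 : a ^ 2 * x ^ 2 / 4 ≤ Real.exp (a * |x|) := by
    nlinarith [h2, sq_abs x]
  rw [div_mul_eq_mul_div, le_div_iff₀ (by positivity : (0:ℝ) < a ^ 2)]
  nlinarith [h5]

/-- Quadratic bound on the moment generating function near zero. -/
lemma mgf_quad_bound (hsetup : BasicSetup mu P) :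
    ∃ t₀ K : ℝ, 0 < t₀ ∧ 0 ≤ K ∧
      (∀ t : ℝ, |t| ≤ t₀ → Integrable (fun x => Real.exp (t * x)) mu) ∧
      (∀ c : ℝ, |c| ≤ t₀ / 2 → ∫ x, Real.exp (c * x) ∂mu ≤ 1 + K * c ^ 2) := by
  have hidint : Integrable (fun x : ℝ => x) mu := integrable_id_mu hsetup
  have hid0 : ∫ x, x ∂mu = 0 := integral_id_mu hsetup
  obtain ⟨hmuprob, -, -, -, ⟨t₀, ht₀, hexp⟩, -, -⟩ := hsetup
  haveI := hmuprob
  set ρ : ℝ → ℝ := fun x => (16 / t₀ ^ 2) * (Real.exp (t₀ * x) + Real.exp (-t₀ * x)) with hρ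
  have hρint : Integrable ρ mu :=
    ((hexp t₀ (by rw [abs_of_pos ht₀])).add
      (hexp (-t₀) (by rw [abs_neg, abs_of_pos ht₀]))).const_mul _
  refine ⟨t₀, ∫ x, ρ x ∂mu, ht₀, integral_nonneg (fun x => by positivity), hexp, ?_⟩
  intro c hc
  have hcabs : |c| ≤ t₀ / 2 := hc
  have hptwise : ∀ x : ℝ, Real.exp (c * x) ≤ 1 + c * x + c ^ 2 * ρ x := by
    intro x
    have h1 := exp_quad (c * x)
    have h2 : Real.exp |c * x| ≤ Real.exp ((t₀ / 2) * |x|) := by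
      apply Real.exp_le_exp.mpr
      rw [abs_mul]
      apply mul_le_mul_of_nonneg_right hcabs (abs_nonneg x) |>.trans
      exact le_refl _
    have h3 : x ^ 2 * Real.exp ((t₀ / 2) * |x|) ≤ ρ x := by
      have hsq := sq_le_exp_abs (t₀ / 2) x (by linarith)
      have h5 : x ^ 2 * Real.exp ((t₀ / 2) * |x|)
          ≤ (4 / (t₀ / 2) ^ 2 * Real.exp ((t₀ / 2) * |x|)) * Real.exp ((t₀ / 2) * |x|) :=
        mul_le_mul_of_nonneg_right hsq (Real.exp_pos _).le
      have h6 : Real.exp ((t₀ / 2) * |x|) * Real.exp ((t₀ / 2) * |x|) = Real.exp (t₀ * |x|) := by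
        rw [← Real.exp_add]
        congr 1
        ring
      have h7 : Real.exp (t₀ * |x|) ≤ Real.exp (t₀ * x) + Real.exp (-t₀ * x) := by
        rcases le_or_gt 0 x with hx | hx
        · rw [abs_of_nonneg hx]
          nlinarith [Real.exp_pos (-t₀ * x)]
        · rw [abs_of_neg hx, show t₀ * -x = -t₀ * x by ring]
          nlinarith [Real.exp_pos (t₀ * x)]
      have h8 : 4 / (t₀ / 2) ^ 2 = 16 / t₀ ^ 2 := by
        field_simp
        ring
      calc x ^ 2 * Real.exp ((t₀ / 2) * |x|)
          ≤ 4 / (t₀ / 2) ^ 2 * Real.exp (t₀ * |x|) := by rw [← h6]; linarith [h5]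
      _ ≤ (16 / t₀ ^ 2) * (Real.exp (t₀ * x) + Real.exp (-t₀ * x)) := by
          rw [h8]
          apply mul_le_mul_of_nonneg_left h7 (by positivity)
    have h4 : (c * x) ^ 2 * Real.exp |c * x| ≤ c ^ 2 * ρ x := by
      calc (c * x) ^ 2 * Real.exp |c * x| ≤ (c * x) ^ 2 * Real.exp ((t₀ / 2) * |x|) := by
            apply mul_le_mul_of_nonneg_left h2 (by positivity)
      _ = c ^ 2 * (x ^ 2 * Real.exp ((t₀ / 2) * |x|)) := by ring
      _ ≤ c ^ 2 * ρ x := mul_le_mul_of_nonneg_left h3 (by positivity)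
    linarith
  have hint1 : Integrable (fun x : ℝ => 1 + c * x + c ^ 2 * ρ x) mu :=
    ((integrable_const 1).add (hidint.const_mul c)).add (hρint.const_mul _)
  have hcint : Integrable (fun x => Real.exp (c * x)) mu :=
    hexp c (by linarith [abs_nonneg c])
  have hle := integral_mono hcint hint1 hptwise
  have i1 : Integrable (fun x : ℝ => 1 + c * x) mu :=
    (integrable_const 1).add (hidint.const_mul c)
  have hsplit : ∫ x, (1 + c * x + c ^ 2 * ρ x) ∂mu
      = 1 + c * (∫ x, x ∂mu) + c ^ 2 * ∫ x, ρ x ∂mu := by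
    rw [integral_add i1 (hρint.const_mul _),
      integral_add (integrable_const 1) (hidint.const_mul c), integral_const,
      integral_const_mul, integral_const_mul]
    simp
  rw [hsplit, hid0, mul_zero, add_zero] at hle
  linarith [hle]

end PartE
section PartE2

open scoped Topology

variable {mu : Measure ℝ} {P : Measure (ℕ → ℝ)} {F : ℝ → ℝ → ℝ}

lemma measurable_Yfun (lam v : ℝ) (N : ℕ) : Measurable (fun ω : ℕ → ℝ => Yfun lam v N ω) := by
  unfold Yfun pathE
  apply Measurable.const_mul
  apply Finset.measurable_sum
  intro ε _
  apply Real.measurable_exp.comp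
  apply Measurable.add
  · exact (Finset.measurable_sum _ (fun n _ => measurable_pi_apply n)).const_mul _
  · exact measurable_const

lemma indep_prod_exp (hsetup : BasicSetup mu P) (c : ℝ)
    (hc : Integrable (fun x => Real.exp (c * x)) mu) (S : Finset ℕ) :
    Integrable (fun ω : ℕ → ℝ => ∏ n ∈ S, Real.exp (c * ω n)) P ∧
      ∫ ω, (∏ n ∈ S, Real.exp (c * ω n)) ∂P = (∫ x, Real.exp (c * x) ∂mu) ^ S.card := by
  classical
  haveI : IsProbabilityMeasure P := hsetup.2.1
  have hindep := hsetup.2.2.2.2.2.2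
  have hfam : ProbabilityTheory.iIndepFun
      (fun n (ω : ℕ → ℝ) => Real.exp (c * ω n)) P := by
    have := hindep.comp (fun _ (x : ℝ) => Real.exp (c * x))
      (fun _ => Real.measurable_exp.comp (measurable_const.mul measurable_id))
    exact this
  have hmeas : ∀ n : ℕ, Measurable (fun ω : ℕ → ℝ => Real.exp (c * ω n)) := fun n =>
    Real.measurable_exp.comp (measurable_const.mul (measurable_pi_apply n))
  have hint1 : ∀ n : ℕ, Integrable (fun ω : ℕ → ℝ => Real.exp (c * ω n)) P := fun n =>
    integrable_exp_coord hsetup c hc n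
  have hval : ∀ n : ℕ, ∫ ω, Real.exp (c * ω n) ∂P = ∫ x, Real.exp (c * x) ∂mu := by
    intro n
    have h2 : ∫ x, Real.exp (c * x) ∂(P.map fun ω : ℕ → ℝ => ω n)
        = ∫ ω, Real.exp (c * ω n) ∂P :=
      integral_map (measurable_pi_apply n).aemeasurable
        (Real.continuous_exp.comp (continuous_const.mul continuous_id)).aestronglyMeasurable
    rw [← h2, hsetup.2.2.2.2.2.1 n]
  induction S using Finset.induction_on with
  | empty => simp
  | @insert a S ha ih =>
    have hindep2 : ProbabilityTheory.IndepFun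
        (∏ j ∈ S, fun ω : ℕ → ℝ => Real.exp (c * ω j))
        (fun ω : ℕ → ℝ => Real.exp (c * ω a)) P :=
      hfam.indepFun_finsetProd_of_notMem hmeas ha
    have hprodeq : (∏ j ∈ S, fun ω : ℕ → ℝ => Real.exp (c * ω j))
        = fun ω : ℕ → ℝ => ∏ j ∈ S, Real.exp (c * ω j) := by
      funext ω
      simp [Finset.prod_apply]
    rw [hprodeq] at hindep2
    have hint2 : Integrable (fun ω : ℕ → ℝ =>
        (∏ j ∈ S, Real.exp (c * ω j)) * Real.exp (c * ω a)) P :=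
      hindep2.integrable_mul ih.1 (hint1 a)
    constructor
    · refine hint2.congr ?_
      refine Filter.Eventually.of_forall fun ω => ?_
      show (∏ j ∈ S, Real.exp (c * ω j)) * Real.exp (c * ω a)
        = ∏ n ∈ insert a S, Real.exp (c * ω n)
      rw [Finset.prod_insert ha]
      ring
    · have : ∫ ω, (∏ n ∈ insert a S, Real.exp (c * ω n)) ∂P
          = ∫ ω, (∏ j ∈ S, Real.exp (c * ω j)) * Real.exp (c * ω a) ∂P := by
        congr 1
        funext ω
        rw [Finset.prod_insert ha]
        ring
      have hmul : ∫ ω, (∏ j ∈ S, Real.exp (c * ω j)) * Real.exp (c * ω a) ∂P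
          = (∫ ω, ∏ j ∈ S, Real.exp (c * ω j) ∂P) * ∫ ω, Real.exp (c * ω a) ∂P :=
        hindep2.integral_fun_mul_eq_mul_integral ih.1.aestronglyMeasurable (hint1 a).aestronglyMeasurable
      rw [this, hmul, ih.2, hval a, Finset.card_insert_of_notMem ha, pow_succ]

lemma integral_Yfun_le_one (hsetup : BasicSetup mu P) (lam h : ℝ) (N : ℕ)
    (hint : Integrable (fun x => Real.exp (-(2 * lam) * x)) mu)
    (hcond : (∫ x, Real.exp (-(2 * lam) * x) ∂mu) * Real.exp (-(2 * lam) * h) ≤ 1) :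
    Integrable (fun ω => Yfun lam (lam * h) N ω) P ∧
      ∫ ω, Yfun lam (lam * h) N ω ∂P ≤ 1 := by
  classical
  haveI : IsProbabilityMeasure P := hsetup.2.1
  set m : ℝ := ∫ x, Real.exp (-(2 * lam) * x) ∂mu with hm
  have hm0 : 0 ≤ m := integral_nonneg fun x => (Real.exp_pos _).le
  set A : (Fin N → Bool) → Finset ℕ := fun ε => lowSet (extendPath N ε) N with hA
  have hrep : ∀ ω : ℕ → ℝ, Yfun lam (lam * h) N ω
      = (1 / 2 : ℝ) ^ N * ∑ ε : Fin N → Bool,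
        Real.exp ((-(2 * (lam * h))) * ((A ε).card : ℝ))
          * ∏ n ∈ A ε, Real.exp ((-(2 * lam)) * ω n) := by
    intro ω
    unfold Yfun pathE
    congr 1
    refine Finset.sum_congr rfl fun ε _ => ?_
    beta_reduce
    rw [Real.exp_add]
    rw [mul_comm (Real.exp _) _]
    congr 1
    rw [Finset.mul_sum, Real.exp_sum]
  have hterm := fun ε : Fin N → Bool => indep_prod_exp hsetup (-(2 * lam)) hint (A ε)
  have hint2 : Integrable (fun ω : ℕ → ℝ => (1 / 2 : ℝ) ^ N * ∑ ε : Fin N → Bool,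
      Real.exp ((-(2 * (lam * h))) * ((A ε).card : ℝ))
        * ∏ n ∈ A ε, Real.exp ((-(2 * lam)) * ω n)) P := by
    apply Integrable.const_mul
    apply integrable_finset_sum
    intro ε _
    exact ((hterm ε).1).const_mul _
  constructor
  · exact hint2.congr (Filter.Eventually.of_forall fun ω => (hrep ω).symm)
  · have heq : ∫ ω, Yfun lam (lam * h) N ω ∂P
        = (1 / 2 : ℝ) ^ N * ∑ ε : Fin N → Bool,
          Real.exp ((-(2 * (lam * h))) * ((A ε).card : ℝ)) * m ^ (A ε).card := by
      rw [integral_congr_ae (Filter.Eventually.of_forall hrep), integral_const_mul,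
        integral_finset_sum _ (fun ε _ => ((hterm ε).1).const_mul _)]
      congr 1
      refine Finset.sum_congr rfl fun ε _ => ?_
      rw [integral_const_mul, (hterm ε).2]
    rw [heq]
    have hbound : ∀ ε : Fin N → Bool,
        Real.exp ((-(2 * (lam * h))) * ((A ε).card : ℝ)) * m ^ (A ε).card ≤ 1 := by
      intro ε
      have he : Real.exp ((-(2 * (lam * h))) * ((A ε).card : ℝ))
          = (Real.exp (-(2 * lam) * h)) ^ (A ε).card := by
        rw [← Real.exp_nat_mul]
        congr 1
        push_cast
        ring
      rw [he, ← mul_pow]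
      have hb0 : 0 ≤ Real.exp (-(2 * lam) * h) * m := mul_nonneg (Real.exp_pos _).le hm0
      have hb1 : Real.exp (-(2 * lam) * h) * m ≤ 1 := by rw [mul_comm]; exact hcond
      exact pow_le_one₀ hb0 hb1
    calc (1 / 2 : ℝ) ^ N * ∑ ε : Fin N → Bool,
        Real.exp ((-(2 * (lam * h))) * ((A ε).card : ℝ)) * m ^ (A ε).card
        ≤ (1 / 2 : ℝ) ^ N * ∑ _ε : Fin N → Bool, (1 : ℝ) := by
          apply mul_le_mul_of_nonneg_left _ (by positivity)
          exact Finset.sum_le_sum fun ε _ => hbound ε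
    _ = 1 := pathE_one N

end PartE2
section PartE3

open scoped Topology ENNReal

variable {mu : Measure ℝ} {P : Measure (ℕ → ℝ)} {F : ℝ → ℝ → ℝ}

lemma g_le_zero_annealed (hsetup : BasicSetup mu P) (hF : HFhyp P F) (lam h : ℝ)
    (hlam : 0 ≤ lam) (hh : 0 ≤ h)
    (hint : Integrable (fun x => Real.exp (-(2 * lam) * x)) mu)
    (hcond : (∫ x, Real.exp (-(2 * lam) * x) ∂mu) * Real.exp (-(2 * lam) * h) ≤ 1) :
    F lam h - lam * h ≤ 0 := by
  classical
  haveI : IsProbabilityMeasure P := hsetup.2.1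
  by_contra hpos
  push_neg at hpos
  set g := F lam h - lam * h with hg
  -- convergence in measure of the normalized log partition functions
  have hmeas : ∀ k : ℕ, AEStronglyMeasurable
      (fun ω => Real.log (Yfun lam (lam * h) (2 * k) ω) / (2 * (k : ℕ) : ℝ)) P := by
    intro k
    exact ((Real.measurable_log.comp (measurable_Yfun lam (lam * h) (2 * k))).div_const
      _).aestronglyMeasurable
  have htim := MeasureTheory.tendstoInMeasure_of_tendsto_ae hmeas
    (ae_tendsto_logY hsetup hF lam h hlam hh)
  have hval := (tendstoInMeasure_iff_dist.mp htim) (g / 2) (by linarith)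
  -- the events where the partition function is large
  have hsub : ∀ k : ℕ, 1 ≤ k → ∀ ω : ℕ → ℝ,
      dist (Real.log (Yfun lam (lam * h) (2 * k) ω) / (2 * (k : ℕ) : ℝ)) g < g / 2 →
      Real.exp (g * k) ≤ Yfun lam (lam * h) (2 * k) ω := by
    intro k hk ω hdist
    have hden : (0 : ℝ) < (2 * (k : ℕ) : ℝ) := by positivity
    rw [Real.dist_eq, abs_lt] at hdist
    have hlog : g / 2 * (2 * (k : ℕ) : ℝ) ≤ Real.log (Yfun lam (lam * h) (2 * k) ω) := by
      have := hdist.1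
      have h2 : g / 2 ≤ Real.log (Yfun lam (lam * h) (2 * k) ω) / (2 * (k : ℕ) : ℝ) := by
        linarith
      calc g / 2 * (2 * (k : ℕ) : ℝ)
          ≤ Real.log (Yfun lam (lam * h) (2 * k) ω) / (2 * (k : ℕ) : ℝ) * (2 * (k : ℕ) : ℝ) :=
            mul_le_mul_of_nonneg_right h2 hden.le
      _ = Real.log (Yfun lam (lam * h) (2 * k) ω) := by field_simp
    have hgk : g * (k : ℝ) ≤ Real.log (Yfun lam (lam * h) (2 * k) ω) := by
      calc g * (k : ℝ) = g / 2 * (2 * (k : ℕ) : ℝ) := by push_cast; ring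
      _ ≤ _ := hlog
    calc Real.exp (g * k) ≤ Real.exp (Real.log (Yfun lam (lam * h) (2 * k) ω)) :=
          Real.exp_le_exp.mpr hgk
    _ = Yfun lam (lam * h) (2 * k) ω := Real.exp_log (Yfun_pos _ _ _ _)
  -- Markov gives a small bound on the probability of that event
  have hmarkov : ∀ k : ℕ, (P {ω | Real.exp (g * k) ≤ Yfun lam (lam * h) (2 * k) ω}).toReal
      ≤ Real.exp (-(g * k)) := by
    intro k
    obtain ⟨hYint, hYle⟩ := integral_Yfun_le_one hsetup lam h (2 * k) hint hcond
    have hmk := MeasureTheory.mul_meas_ge_le_integral_of_nonneg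
      (Filter.Eventually.of_forall fun ω => (Yfun_pos lam (lam * h) (2 * k) ω).le)
      hYint (Real.exp (g * k))
    have hepos : (0 : ℝ) < Real.exp (g * k) := Real.exp_pos _
    have h1 : Real.exp (g * k)
        * (P {ω | Real.exp (g * k) ≤ Yfun lam (lam * h) (2 * k) ω}).toReal ≤ 1 :=
      le_trans hmk hYle
    rw [Real.exp_neg, inv_eq_one_div, le_div_iff₀ hepos]
    nlinarith [h1]
  -- eventually both bounds are violated
  have hev1 : ∀ᶠ k : ℕ in atTop,
      (P {ω | g / 2 ≤ dist (Real.log (Yfun lam (lam * h) (2 * k) ω)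
        / (2 * (k : ℕ) : ℝ)) g}) < ENNReal.ofReal (1 / 2) :=
    hval.eventually_lt_const (by simp [ENNReal.ofReal_pos])
  have hev2 : ∀ᶠ k : ℕ in atTop, Real.exp (-(g * k)) < 1 / 2 := by
    have hmul : Tendsto (fun k : ℕ => g * (k : ℝ)) atTop atTop :=
      tendsto_natCast_atTop_atTop.const_mul_atTop hpos
    have hneg : Tendsto (fun k : ℕ => -(g * (k : ℝ))) atTop atBot :=
      tendsto_neg_atBot_iff.mpr hmul
    have : Tendsto (fun k : ℕ => Real.exp (-(g * k))) atTop (𝓝 0) :=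
      Real.tendsto_exp_atBot.comp hneg
    exact this.eventually_lt_const (by norm_num)
  obtain ⟨k, hk1, hk2, hk3⟩ :=
    (hev1.and (hev2.and (Filter.eventually_ge_atTop 1))).exists
  set Aset := {ω : ℕ → ℝ | g / 2 ≤ dist (Real.log (Yfun lam (lam * h) (2 * k) ω)
    / (2 * (k : ℕ) : ℝ)) g} with hAset
  set Bset := {ω : ℕ → ℝ | Real.exp (g * k) ≤ Yfun lam (lam * h) (2 * k) ω} with hBset
  have hcover : (Set.univ : Set (ℕ → ℝ)) ⊆ Aset ∪ Bset := by
    intro ω _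
    by_cases hd : g / 2 ≤ dist (Real.log (Yfun lam (lam * h) (2 * k) ω)
      / (2 * (k : ℕ) : ℝ)) g
    · exact Or.inl hd
    · exact Or.inr (hsub k hk3 ω (not_le.mp hd))
  have hone : (1 : ℝ≥0∞) ≤ P Aset + P Bset := by
    calc (1 : ℝ≥0∞) = P Set.univ := (measure_univ).symm
    _ ≤ P (Aset ∪ Bset) := measure_mono hcover
    _ ≤ P Aset + P Bset := measure_union_le _ _
  have hBlt : P Bset < ENNReal.ofReal (1 / 2) := by
    have hb1 : P Bset ≤ ENNReal.ofReal (Real.exp (-(g * k))) :=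
      (ENNReal.le_ofReal_iff_toReal_le (measure_ne_top P _) (Real.exp_pos _).le).mpr
        (hmarkov k)
    exact lt_of_le_of_lt hb1 ((ENNReal.ofReal_lt_ofReal_iff (by norm_num)).mpr hk2)
  have hsum : P Aset + P Bset < ENNReal.ofReal (1 / 2) + ENNReal.ofReal (1 / 2) :=
    ENNReal.add_lt_add hk1 hBlt
  rw [← ENNReal.ofReal_add (by norm_num) (by norm_num)] at hsum
  norm_num at hsum
  exact absurd (lt_of_le_of_lt hone hsum) (by simp)

end PartE3
section PartE4

open scoped Topology

variable {mu : Measure ℝ} {P : Measure (ℕ → ℝ)} {F : ℝ → ℝ → ℝ}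

lemma deloc_small_lam (hsetup : BasicSetup mu P) (hF : HFhyp P F) :
    ∃ lb C : ℝ, 0 < lb ∧ 0 ≤ C ∧
      ∀ lam h : ℝ, 0 < lam → lam ≤ lb → C * lam ≤ h → F lam h - lam * h ≤ 0 := by
  obtain ⟨t₀, K, ht₀, hK, hexp, hquad⟩ := mgf_quad_bound hsetup
  refine ⟨t₀ / 4, 2 * K, by positivity, by positivity, ?_⟩
  intro lam h hlam hllb hCh
  have hh : 0 ≤ h := le_trans (by positivity) hCh
  have habs : |(-(2 * lam))| = 2 * lam := by
    rw [abs_neg, abs_of_pos (by positivity)]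
  have hint : Integrable (fun x => Real.exp (-(2 * lam) * x)) mu :=
    hexp (-(2 * lam)) (by rw [habs]; linarith)
  have hm := hquad (-(2 * lam)) (by rw [habs]; linarith)
  have hcond : (∫ x, Real.exp (-(2 * lam) * x) ∂mu) * Real.exp (-(2 * lam) * h) ≤ 1 := by
    have h1 : 1 + K * (-(2 * lam)) ^ 2 ≤ Real.exp (2 * lam * h) := by
      have h2 : 1 + 2 * lam * h ≤ Real.exp (2 * lam * h) := by
        nlinarith [Real.add_one_le_exp (2 * lam * h)]
      have h3 : K * (-(2 * lam)) ^ 2 ≤ 2 * lam * h := by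
        have : K * (-(2 * lam)) ^ 2 = (2 * K * lam) * (2 * lam) := by ring
        rw [this]
        have h4 : 2 * K * lam ≤ h := by nlinarith
        nlinarith
      linarith
    have h5 : (∫ x, Real.exp (-(2 * lam) * x) ∂mu) ≤ Real.exp (2 * lam * h) :=
      le_trans hm h1
    have h6 : (∫ x, Real.exp (-(2 * lam) * x) ∂mu) * Real.exp (-(2 * lam) * h)
        ≤ Real.exp (2 * lam * h) * Real.exp (-(2 * lam) * h) :=
      mul_le_mul_of_nonneg_right h5 (Real.exp_pos _).le
    rwa [← Real.exp_add, show 2 * lam * h + -(2 * lam) * h = 0 by ring, Real.exp_zero] at h6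
  exact g_le_zero_annealed hsetup hF lam h hlam.le hh hint hcond

end PartE4
/-- Theorem 1: structure of the phase diagram.
There is an increasing function `h_c : [0,∞) → [0,∞]` such that the localized region
`{f(λ,h) > λh}` is `{h < h_c(λ)}` and the delocalized region `{f(λ,h) = λh}` is
`{h ≥ h_c(λ)}`; `h_c` is continuous on `[0,∞)` if everywhere finite, and otherwise on
`[0, sup{λ : h_c(λ) < ∞})`. Here `F λ h` is the (non-random) quenched free energy. -/
theorem phase_diagram_structure
    (mu : Measure ℝ) (P : Measure (ℕ → ℝ)) (hsetup : BasicSetup mu P)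
    (F : ℝ → ℝ → ℝ)
    (hF : ∀ lam h : ℝ, 0 ≤ lam → 0 ≤ h →
      ∀ᵐ ω ∂P, Tendsto (fun k : ℕ => Real.log (Ztilde false lam h (2 * k) ω) / (2 * k))
        atTop (nhds (F lam h))) :
    ∃ hc : ℝ → ℝ≥0∞,
      MonotoneOn hc (Set.Ici 0) ∧
      (∀ lam ≥ (0 : ℝ), ∀ h ≥ (0 : ℝ),
        (lam * h < F lam h ↔ ENNReal.ofReal h < hc lam)) ∧
      (∀ lam ≥ (0 : ℝ), ∀ h ≥ (0 : ℝ),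
        (F lam h = lam * h ↔ hc lam ≤ ENNReal.ofReal h)) ∧
      ((∀ lam ≥ (0 : ℝ), hc lam < ⊤) → ContinuousOn hc (Set.Ici 0)) ∧
      (¬ (∀ lam ≥ (0 : ℝ), hc lam < ⊤) →
        ContinuousOn hc (Set.Ico 0 (sSup {lam : ℝ | 0 ≤ lam ∧ hc lam < ⊤}))) := by
  classical
  have hF' : HFhyp P F := hF
  haveI : IsProbabilityMeasure P := hsetup.2.1
  obtain ⟨lb, C, hlb, hC, hdeloc⟩ := deloc_small_lam hsetup hF'
  set S : ℝ → Set ℝ := fun lam => {h : ℝ | 0 ≤ h ∧ 0 < F lam h - lam * h} with hS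
  set hc : ℝ → ℝ≥0∞ := fun lam => ⨆ h ∈ S lam, ENNReal.ofReal h with hhc
  have hg0 : ∀ lam h : ℝ, 0 ≤ lam → 0 ≤ h → 0 ≤ F lam h - lam * h :=
    fun lam h hl hh => g_nonneg hsetup hF' lam h hl hh
  -- the key characterization of the supremum
  have key : ∀ lam : ℝ, 0 ≤ lam → ∀ h : ℝ, 0 ≤ h →
      (0 < F lam h - lam * h ↔ ENNReal.ofReal h < hc lam) := by
    intro lam hlam h hh
    constructor
    · intro hpos
      rcases eq_or_lt_of_le hlam with h0 | hlampos
      · exfalso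
        rw [← h0, F_zero hsetup hF' h hh] at hpos
        simp at hpos
      · set h' := h + (F lam h - lam * h) / (4 * lam) with hh'
        have hδ : 0 < (F lam h - lam * h) / (4 * lam) := by positivity
        have hlt : h < h' := by rw [hh']; linarith
        clear_value h'
        have hmem : h' ∈ S lam := by
          refine ⟨by linarith, ?_⟩
          have hlip := g_lip hsetup hF' lam h h' hlam hh hlt.le
          have he : 2 * lam * (h' - h) = (F lam h - lam * h) / 2 := by
            rw [hh']
            field_simp
            ring
          rw [he] at hlip
          linarith
        calc ENNReal.ofReal h < ENNReal.ofReal h' :=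
              (ENNReal.ofReal_lt_ofReal_iff (by linarith)).mpr hlt
        _ ≤ hc lam := le_iSup₂ (f := fun h'' _ => ENNReal.ofReal h'') h' hmem
    · intro hlt
      obtain ⟨h', hlt2⟩ := lt_iSup_iff.mp hlt
      obtain ⟨hmem, hlt3⟩ := lt_iSup_iff.mp hlt2
      have hlt4 : h < h' := by
        by_contra hle
        push_neg at hle
        exact absurd hlt3 (not_lt.mpr (ENNReal.ofReal_le_ofReal hle))
      exact lt_of_lt_of_le hmem.2 (g_antitone hsetup hF' lam h h' hlam hh hlt4.le)
  have hmono : MonotoneOn hc (Set.Ici 0) := by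
    intro l1 hl1 l2 hl2 h12
    refine biSup_mono fun h hh => ?_
    exact ⟨hh.1, lt_of_lt_of_le hh.2 (g_mono_lam hsetup hF' l1 l2 h hl1 h12 hh.1)⟩
  have hc0 : hc 0 = 0 := by
    refine le_antisymm ?_ (zero_le)
    refine iSup₂_le fun h hmem => ?_
    exfalso
    have := hmem.2
    rw [F_zero hsetup hF' h hmem.1] at this
    simp at this
  have hupper : ∀ lam : ℝ, 0 < lam → lam ≤ lb → hc lam ≤ ENNReal.ofReal (C * lam) := by
    intro lam hpos hle
    refine iSup₂_le fun h hmem => ENNReal.ofReal_le_ofReal ?_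
    by_contra hgt
    push_neg at hgt
    exact absurd hmem.2 (not_lt.mpr (hdeloc lam h hpos hle hgt.le))
  have cont0 : ∀ T : Set ℝ, T ⊆ Set.Ici 0 → ContinuousWithinAt hc T 0 := by
    intro T hT
    unfold ContinuousWithinAt
    rw [hc0]
    have hub : Tendsto (fun lam : ℝ => ENNReal.ofReal (C * lam)) (𝓝[T] 0) (𝓝 0) := by
      have hcont : Continuous (fun lam : ℝ => ENNReal.ofReal (C * lam)) :=
        ENNReal.continuous_ofReal.comp (continuous_const.mul continuous_id)
      have h1 := (hcont.tendsto 0).mono_left (nhdsWithin_le_nhds (s := T))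
      simpa using h1
    refine tendsto_of_tendsto_of_tendsto_of_le_of_le' tendsto_const_nhds hub
      (Filter.Eventually.of_forall fun lam => zero_le) ?_
    have hev : ∀ᶠ lam in 𝓝[T] (0 : ℝ), lam < lb :=
      nhdsWithin_le_nhds (Iio_mem_nhds hlb)
    filter_upwards [hev, self_mem_nhdsWithin] with lam hlam hmemT
    have h0 : (0 : ℝ) ≤ lam := hT hmemT
    rcases eq_or_lt_of_le h0 with he | hposl
    · rw [← he, hc0]
      exact zero_le
    · exact hupper lam hposl hlam.le
  have contW : ∀ W : Set ℝ, IsOpen W → Convex ℝ W →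
      (∀ lam ∈ W, 0 < lam ∧ hc lam < ⊤) → ∀ lam0 ∈ W, ContinuousAt hc lam0 := by
    intro W hWopen hWconv hWprop
    set r : ℝ → ℝ := fun lam => (hc lam).toReal with hrdef
    set u : ℝ → ℝ := fun lam => lam * r lam with hudef
    have hrmem : ∀ lam ∈ W, ∀ h : ℝ, 0 ≤ h →
        (0 < F lam h - lam * h ↔ h < r lam) := by
      intro lam hW h hh
      obtain ⟨hposl, hfinl⟩ := hWprop lam hW
      rw [key lam hposl.le h hh,
        show hc lam = ENNReal.ofReal (r lam) from (ENNReal.ofReal_toReal hfinl.ne).symm]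
      exact ENNReal.ofReal_lt_ofReal_iff_of_nonneg hh
    have hrnn : ∀ lam : ℝ, 0 ≤ r lam := fun lam => ENNReal.toReal_nonneg
    have hunn : ∀ lam ∈ W, 0 ≤ u lam := fun lam hW =>
      mul_nonneg (hWprop lam hW).1.le (hrnn lam)
    have hGr : ∀ lam ∈ W, F lam (r lam) - lam * r lam = 0 := by
      intro lam hW
      have hnot : ¬ (0 < F lam (r lam) - lam * r lam) := by
        rw [hrmem lam hW (r lam) (hrnn lam)]
        exact lt_irrefl _
      have hge := hg0 lam (r lam) (hWprop lam hW).1.le (hrnn lam)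
      linarith [le_of_not_gt hnot]
    have huiff : ∀ lam ∈ W, ∀ v : ℝ, 0 ≤ v →
        (0 < F lam (v / lam) - v ↔ v < u lam) := by
      intro lam hW v hv
      have hposl := (hWprop lam hW).1
      have hdiv : (0:ℝ) ≤ v / lam := div_nonneg hv hposl.le
      have heq : F lam (v / lam) - v = F lam (v / lam) - lam * (v / lam) := by
        rw [mul_div_assoc']
        rw [mul_div_cancel_left₀ v hposl.ne']
      rw [heq, hrmem lam hW (v / lam) hdiv, div_lt_iff₀ hposl, hudef, mul_comm]
    have hcu : ConvexOn ℝ W u := by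
      refine ⟨hWconv, ?_⟩
      intro l1 hl1 l2 hl2 a b ha hb hab
      simp only [smul_eq_mul]
      by_contra hgt
      push_neg at hgt
      obtain rfl : b = 1 - a := by linarith
      set L := a * l1 + (1 - a) * l2 with hL
      have hLW : L ∈ W := by
        have := hWconv hl1 hl2 ha hb hab
        simpa [hL, smul_eq_mul] using this
      have hLpos := (hWprop L hLW).1
      set vt := a * u l1 + (1 - a) * u l2 with hvt
      have hvtnn : 0 ≤ vt :=
        add_nonneg (mul_nonneg ha (hunn l1 hl1)) (mul_nonneg hb (hunn l2 hl2))
      have hwin : 0 < F L (vt / L) - vt := (huiff L hLW vt hvtnn).mpr hgt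
      have hr1 : u l1 / l1 = r l1 := by
        rw [hudef]
        exact mul_div_cancel_left₀ (r l1) (hWprop l1 hl1).1.ne'
      have hr2 : u l2 / l2 = r l2 := by
        rw [hudef]
        exact mul_div_cancel_left₀ (r l2) (hWprop l2 hl2).1.ne'
      have hcc := g_convex_comb hsetup hF' l1 l2 (u l1) (u l2) a
        (hWprop l1 hl1).1 (hWprop l2 hl2).1 (hunn l1 hl1) (hunn l2 hl2) ha (by linarith)
        (by rw [← hL]; exact hLpos)
      rw [← hL, ← hvt, hr1, hr2] at hcc
      have hz1 : F l1 (r l1) - u l1 = 0 := by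
        simpa [hudef] using hGr l1 hl1
      have hz2 : F l2 (r l2) - u l2 = 0 := by
        simpa [hudef] using hGr l2 hl2
      rw [hz1, hz2] at hcc
      simp at hcc
      linarith
    have hUcont : ContinuousOn u W := hcu.continuousOn hWopen
    intro lam0 hlam0
    have hrcont : ContinuousAt (fun lam => u lam / lam) lam0 :=
      (hUcont.continuousAt (hWopen.mem_nhds hlam0)).div continuousAt_id
        (hWprop lam0 hlam0).1.ne'
    have hccomp : ContinuousAt (fun lam => ENNReal.ofReal (u lam / lam)) lam0 :=
      ENNReal.continuous_ofReal.continuousAt.comp hrcont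
    refine hccomp.congr ?_
    have hWev : ∀ᶠ lam in 𝓝 lam0, lam ∈ W := hWopen.eventually_mem hlam0
    filter_upwards [hWev] with lam hW
    have hposl := (hWprop lam hW).1
    have hru : u lam / lam = r lam := by
      rw [hudef]
      exact mul_div_cancel_left₀ (r lam) hposl.ne'
    rw [hru, hrdef]
    exact (ENNReal.ofReal_toReal (hWprop lam hW).2.ne)
  refine ⟨hc, hmono, ?_, ?_, ?_, ?_⟩
  · intro lam hlam h hh
    have hsp : lam * h < F lam h ↔ 0 < F lam h - lam * h := sub_pos.symm
    rw [hsp]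
    exact key lam hlam h hh
  · intro lam hlam h hh
    constructor
    · intro heq
      rw [← not_lt, ← key lam hlam h hh]
      intro hpos
      rw [heq] at hpos
      simp at hpos
    · intro hle
      have hnl : ¬ ENNReal.ofReal h < hc lam := not_lt.mpr hle
      rw [← key lam hlam h hh] at hnl
      have := hg0 lam h hlam hh
      linarith [le_of_not_gt hnl]
  · -- case A
    intro hfin
    intro lam0 hlam0
    rcases eq_or_lt_of_le (show (0:ℝ) ≤ lam0 from hlam0) with he | hpos
    · have h0 : lam0 = 0 := he.symm
      subst h0
      exact cont0 (Set.Ici 0) le_rfl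
    · refine (contW (Set.Ioi 0) isOpen_Ioi (convex_Ioi 0)
        (fun lam hlam => ⟨hlam, hfin lam hlam.le⟩) lam0 hpos).continuousWithinAt
  · -- case B
    intro hnfin
    set T := {lam : ℝ | 0 ≤ lam ∧ hc lam < ⊤} with hTdef
    set lamstar := sSup T with hls
    push_neg at hnfin
    obtain ⟨lam1, hlam1, htop⟩ := hnfin
    have hTne : T.Nonempty := ⟨0, le_refl 0, by rw [hc0]; simp⟩
    have hfinIco : ∀ lam ∈ Set.Ico (0:ℝ) lamstar, hc lam < ⊤ := by
      intro lam hlam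
      obtain ⟨lam', hlam', hltlam⟩ := exists_lt_of_lt_csSup hTne hlam.2
      calc hc lam ≤ hc lam' := hmono (Set.mem_Ici.mpr hlam.1)
            (Set.mem_Ici.mpr hlam'.1) hltlam.le
      _ < ⊤ := hlam'.2
    intro lam0 hlam0
    rcases eq_or_lt_of_le hlam0.1 with he | hpos
    · have h0 : lam0 = 0 := he.symm
      subst h0
      exact cont0 (Set.Ico 0 lamstar) (fun x hx => hx.1)
    · refine (contW (Set.Ioo 0 lamstar) isOpen_Ioo (convex_Ioo 0 lamstar)
        (fun lam hlam => ⟨hlam.1, hfinIco lam ⟨hlam.1.le, hlam.2⟩⟩) lam0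
        ⟨hpos, hlam0.2⟩).continuousWithinAt
end

section
/- (Deterministic tail bound for 𝒩 given small restricted free energies.) Let λ > 0, ε > 0, N even and m̄ ∈ {0, 2, …, N}. There is an absolute constant c_3 > 0 (from the random walk estimate P(S_n > 0 for n = 1,…,N−1, S_N = 0) ≥ 1/(c_3 N^{3/2})) and a constant c_4 depending only on λε such that: for any ω ∈ ℝ^N with the property that F^c_{N,ω}(λ,h;m) < −λ ε m / N for every m ≥ m̄, one has P^c_{N,ω}( 𝒩 ≥ m̄ ) ≤ c_4 N^{3/2} exp(−λ ε m̄). -/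
open MeasureTheory ProbabilityTheory Filter Finset

open MeasureTheory ProbabilityTheory Filter Finset

namespace Aux
open List DyckStep Stirling
attribute [local instance] Classical.propDecidable

/-! ### walkPos basics -/

lemma walkPos_succ (ε : ℕ → Bool) (n : ℕ) :
    walkPos ε (n+1) = walkPos ε n + (if ε n then (1:ℤ) else -1) :=
  Finset.sum_range_succ _ _

lemma walk_count (l : List Bool) (n : ℕ) :
    walkPos (fun j => l.getD j false) n = 2 * ((l.take n).count true : ℤ) - n := by
  induction n with
  | zero => simp [walkPos]
  | succ n ih =>
    rw [walkPos_succ, ih]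
    by_cases h : n < l.length
    · rw [List.take_succ]
      have h1 : l[n]? = some l[n] := List.getElem?_eq_getElem h
      rw [h1]
      simp only [Option.toList_some, List.count_append, List.count_singleton']
      have h2 : l.getD n false = l[n] := List.getD_eq_getElem l false h
      rw [h2]
      cases hb : l[n] <;> simp <;> push_cast <;> ring
    · have h1 : l.take (n+1) = l.take n := by
        rw [List.take_of_length_le (by omega), List.take_of_length_le (by omega)]
      have h2 : l.getD n false = false := List.getD_eq_default l false (by omega)
      rw [h1, h2]
      simp
      ring

def stepToBool : DyckStep → Bool := fun s => s = U

lemma stepToBool_inj : Function.Injective stepToBool := by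
  intro a b h; cases a <;> cases b <;> simp_all [stepToBool]

lemma count_map_true (s : List DyckStep) : (s.map stepToBool).count true = s.count U := by
  induction s with
  | nil => rfl
  | cons a t ih => cases a <;> simp [stepToBool, List.count_cons, ih]

lemma count_UD (s : List DyckStep) : s.count U + s.count D = s.length := by
  induction s with
  | nil => rfl
  | cons a t ih => cases a <;> simp [List.count_cons, ih] <;> omega

def decList (p : DyckWord) : List Bool := true :: (p.toList.map stepToBool) ++ [false]

lemma count_decList_take (p : DyckWord) (n : ℕ) (hn : 1 ≤ n) :
    ((decList p).take n).count true = 1 + (p.toList.take (n-1)).count U := by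
  obtain ⟨m, rfl⟩ := Nat.exists_eq_add_of_le hn
  have hm : 1 + m - 1 = m := by omega
  simp only [decList, hm]
  rw [Nat.add_comm 1 m]
  rw [List.take_append, List.count_append]
  have hc : List.take (m+1) (true :: p.toList.map stepToBool)
      = true :: List.take m (p.toList.map stepToBool) := rfl
  rw [hc, List.count_cons]
  have h1 : ∀ j : ℕ, ((List.take j ([false] : List Bool)).count true) = 0 := by
    intro j; cases j <;> simp
  rw [h1, ← List.map_take, count_map_true]
  simp
  omega

lemma stirling_lb (n : ℕ) (hn : 1 ≤ n) : Real.sqrt Real.pi ≤ stirlingSeq n := by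
  obtain ⟨m, rfl⟩ := Nat.exists_eq_add_of_le hn
  have ht : Filter.Tendsto (stirlingSeq ∘ Nat.succ) Filter.atTop (nhds (Real.sqrt Real.pi)) :=
    tendsto_stirlingSeq_sqrt_pi.comp (Filter.tendsto_add_atTop_nat 1)
  have := stirlingSeq'_antitone.le_of_tendsto ht m
  simpa [Nat.add_comm] using this

lemma stirling_ub (n : ℕ) (hn : 1 ≤ n) : stirlingSeq n ≤ Real.exp 1 / Real.sqrt 2 := by
  obtain ⟨m, rfl⟩ := Nat.exists_eq_add_of_le hn
  have := stirlingSeq'_antitone (Nat.zero_le m)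
  simpa [Nat.add_comm, stirlingSeq_one] using this

lemma factorial_eq (n : ℕ) (hn : 1 ≤ n) :
    (n.factorial : ℝ) = stirlingSeq n * (Real.sqrt (2 * n) * ((n : ℝ) / Real.exp 1) ^ n) := by
  rw [stirlingSeq, div_mul_cancel₀]
  have hnR : (0:ℝ) < n := by exact_mod_cast hn
  positivity

lemma cb_bound (n : ℕ) (hn : 1 ≤ n) :
    (1/3 : ℝ) * 4 ^ n ≤ (Nat.centralBinom n : ℝ) * Real.sqrt n := by
  have hnR : (0:ℝ) < n := by exact_mod_cast hn
  have hX : (0:ℝ) < ((n : ℝ) / Real.exp 1) ^ n := by positivity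
  have ha0 : 0 < stirlingSeq n := by
    have := stirlingSeq'_pos (n - 1)
    rwa [show n - 1 + 1 = n by omega] at this
  have hb0 : Real.sqrt Real.pi ≤ stirlingSeq (2*n) := stirling_lb _ (by omega)
  have haU : stirlingSeq n ≤ Real.exp 1 / Real.sqrt 2 := stirling_ub _ hn
  have e1 : (n.factorial : ℝ) = stirlingSeq n * (Real.sqrt (2*(n:ℝ)) * ((n:ℝ)/Real.exp 1)^n) :=
    factorial_eq n hn
  have e2 : ((2*n).factorial : ℝ)
      = stirlingSeq (2*n) * (Real.sqrt (2*((2*n:ℕ):ℝ)) * (((2*n:ℕ):ℝ)/Real.exp 1)^(2*n)) :=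
    factorial_eq (2*n) (by omega)
  have e3 : (Nat.centralBinom n : ℝ) * (n.factorial:ℝ) * (n.factorial:ℝ) = ((2*n).factorial : ℝ) := by
    have h := Nat.choose_mul_factorial_mul_factorial (show n ≤ 2*n by omega)
    rw [show 2*n - n = n by omega] at h
    rw [Nat.centralBinom]
    exact_mod_cast h
  have sq2n : Real.sqrt (2*(n:ℝ)) ^ 2 = 2*(n:ℝ) := Real.sq_sqrt (by positivity)
  have s4n : Real.sqrt (2*((2*n:ℕ):ℝ)) * Real.sqrt n = 2*(n:ℝ) := by
    push_cast
    rw [← Real.sqrt_mul (by positivity)]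
    rw [show 2*(2*(n:ℝ))*n = (2*n)^2 by ring]
    exact Real.sqrt_sq (by positivity)
  have pow2 : (((2*n:ℕ):ℝ)/Real.exp 1)^(2*n) = 4^n * (((n:ℝ)/Real.exp 1)^n)^2 := by
    push_cast
    rw [show (2*(n:ℝ))/Real.exp 1 = 2 * ((n:ℝ)/Real.exp 1) by ring]
    rw [mul_pow, show (2:ℝ)^(2*n) = 4^n by rw [pow_mul]; norm_num,
      show ((n:ℝ)/Real.exp 1)^(2*n) = (((n:ℝ)/Real.exp 1)^n)^2 by rw [← pow_mul, Nat.mul_comm]]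
  have key : (Nat.centralBinom n : ℝ) * Real.sqrt n * (stirlingSeq n)^2
      = stirlingSeq (2*n) * 4^n := by
    have hpos : Real.sqrt (2*(n:ℝ))^2 * (((n:ℝ)/Real.exp 1)^n)^2 ≠ 0 := by
      rw [sq2n]; positivity
    apply mul_right_cancel₀ hpos
    have lhs : (Nat.centralBinom n:ℝ) * Real.sqrt n * (stirlingSeq n)^2
          * (Real.sqrt (2*(n:ℝ))^2 * (((n:ℝ)/Real.exp 1)^n)^2)
        = Real.sqrt n * ((Nat.centralBinom n:ℝ) * (n.factorial:ℝ) * (n.factorial:ℝ)) := by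
      rw [e1]; ring
    rw [lhs, e3, e2, pow2, sq2n]
    linear_combination (stirlingSeq (2*n) * 4^n * (((n:ℝ)/Real.exp 1)^n)^2) * s4n
  have ha2 : (stirlingSeq n)^2 ≤ Real.exp 1 ^ 2 / 2 := by
    have h1 : (stirlingSeq n)^2 ≤ (Real.exp 1 / Real.sqrt 2)^2 :=
      pow_le_pow_left₀ ha0.le haU 2
    calc (stirlingSeq n)^2 ≤ (Real.exp 1 / Real.sqrt 2)^2 := h1
      _ = Real.exp 1 ^2 / 2 := by
          rw [div_pow, Real.sq_sqrt (by norm_num : (0:ℝ) ≤ 2)]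
  have hpi : (1/3:ℝ) * (Real.exp 1 ^ 2 / 2) ≤ Real.sqrt Real.pi := by
    have he2 : Real.exp 1 ^ 2 < 7.3891 := by
      nlinarith [Real.exp_one_lt_d9, Real.exp_pos 1]
    have hs : (1.24:ℝ) ≤ Real.sqrt Real.pi := by
      nlinarith [Real.sq_sqrt Real.pi_pos.le, Real.pi_gt_three, Real.sqrt_nonneg Real.pi]
    linarith
  have h4 : (0:ℝ) < 4^n := by positivity
  have hmain : (1/3:ℝ) * 4^n * (stirlingSeq n)^2
      ≤ (Nat.centralBinom n : ℝ) * Real.sqrt n * (stirlingSeq n)^2 := by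
    rw [key]
    nlinarith [hb0, hpi, ha2, h4, ha0]
  exact le_of_mul_le_mul_right hmain (by positivity)


/-! ### Decoded Dyck paths -/

def decFun (N : ℕ) (p : DyckWord) : Fin N → Bool := fun j => (decList p).getD j false

lemma extend_decFun (N : ℕ) (p : DyckWord) (hl : (decList p).length ≤ N) :
    extendPath N (decFun N p) = fun j => (decList p).getD j false := by
  funext j
  unfold extendPath decFun
  split
  · rfl
  · exact (List.getD_eq_default _ _ (by omega)).symm

lemma length_decList (p : DyckWord) : (decList p).length = p.toList.length + 2 := by
  simp [decList]

lemma count_UD' (s : List DyckStep) : s.count U + s.count D = s.length := count_UD s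

lemma count_take_ge (p : DyckWord) (m : ℕ) :
    min m p.toList.length ≤ 2 * (p.toList.take m).count U := by
  have h := p.count_D_le_count_U m
  have h2 := count_UD (p.toList.take m)
  have h3 : (p.toList.take m).length = min m p.toList.length := List.length_take
  omega

lemma dec_prop (k : ℕ) (hk : 1 ≤ k) (p : DyckWord) (hp : p.semilength = k - 1) :
    (∀ n, 1 ≤ n → n < 2*k → 0 < walkPos (extendPath (2*k) (decFun (2*k) p)) n) ∧
      walkPos (extendPath (2*k) (decFun (2*k) p)) (2*k) = 0 := by
  have hsl := p.two_mul_semilength_eq_length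
  rw [hp] at hsl
  have hlen : p.toList.length = 2*k - 2 := by omega
  have hdl : (decList p).length = 2*k := by rw [length_decList]; omega
  rw [extend_decFun _ _ (by omega)]
  constructor
  · intro n h1 hn
    rw [walk_count, count_decList_take _ _ h1]
    have h2 := count_take_ge p (n-1)
    have hmin : min (n-1) p.toList.length = n - 1 := by omega
    rw [hmin] at h2
    push_cast
    omega
  · rw [walk_count, count_decList_take _ _ (by omega)]
    have htk : p.toList.take (2*k - 1) = p.toList := List.take_of_length_le (by omega)
    rw [htk]
    have hcU : p.toList.count U = k - 1 := hp
    rw [hcU]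
    push_cast
    omega

lemma decFun_inj (N : ℕ) (p q : DyckWord) (hp : (decList p).length = N)
    (hq : (decList q).length = N) (h : decFun N p = decFun N q) : p = q := by
  have hl : decList p = decList q := by
    apply List.ext_getElem (by omega)
    intro i h1 h2
    have h3 := congrFun h ⟨i, by omega⟩
    unfold decFun at h3
    rwa [List.getD_eq_getElem _ _ h1, List.getD_eq_getElem _ _ h2] at h3
  unfold decList at hl
  have hl2 : p.toList.map stepToBool = q.toList.map stepToBool := by
    have h4 := (List.append_inj' hl rfl).1
    simpa using h4
  have h5 := List.map_injective_iff.mpr stepToBool_inj hl2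
  exact DyckWord.ext h5

lemma card_paths_ge (k : ℕ) (hk : 1 ≤ k) :
    catalan (k-1) ≤ Nat.card {ε : Fin (2*k) → Bool //
      (∀ n, 1 ≤ n → n < 2*k → 0 < walkPos (extendPath (2*k) ε) n) ∧
        walkPos (extendPath (2*k) ε) (2*k) = 0} := by
  rw [← DyckWord.card_dyckWord_semilength_eq_catalan (k-1), ← Nat.card_eq_fintype_card]
  have hdll : ∀ p : DyckWord, p.semilength = k - 1 → (decList p).length = 2*k := by
    intro p hp
    have hsl := p.two_mul_semilength_eq_length
    rw [hp] at hsl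
    rw [length_decList]; omega
  apply Nat.card_le_card_of_injective
    (fun q => ⟨decFun (2*k) q.1, dec_prop k hk q.1 q.2⟩)
  intro q q' hqq
  have h6 := decFun_inj (2*k) q.1 q'.1 (hdll q.1 q.2) (hdll q'.1 q'.2)
    (congrArg Subtype.val hqq)
  exact Subtype.ext h6

lemma pathE_ind (N : ℕ) (A : (ℕ → Bool) → Prop) :
    pathE N (fun ε => ind (A ε))
      = (1/2:ℝ)^N * (Nat.card {ε : Fin N → Bool // A (extendPath N ε)}) := by
  unfold pathE
  congr 1
  calc ∑ ε : Fin N → Bool, ind (A (extendPath N ε))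
      = ∑ ε : Fin N → Bool, if A (extendPath N ε) then (1:ℝ) else 0 := by
        apply Finset.sum_congr rfl
        intro ε _
        rw [ind]
    _ = ((Finset.univ.filter (fun ε : Fin N → Bool => A (extendPath N ε))).card : ℝ) :=
        Finset.sum_boole _ _
    _ = _ := by rw [Nat.card_eq_fintype_card, Fintype.card_subtype]

lemma part1 (k : ℕ) (hk : 1 ≤ k) :
    1 / (12 * ((2*k:ℝ) * Real.sqrt (2*k)))
      ≤ pathE (2*k) (fun ε => ind ((∀ n, 1 ≤ n → n < 2*k → 0 < walkPos ε n)
          ∧ walkPos ε (2*k) = 0)) := by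
  rw [pathE_ind]
  have hkR : (1:ℝ) ≤ (k:ℝ) := by exact_mod_cast hk
  have hs : (0:ℝ) < Real.sqrt (2*(k:ℝ)) := Real.sqrt_pos.mpr (by linarith)
  have hcard := card_paths_ge k hk
  have hcat : (k:ℝ) * (catalan (k-1) : ℝ) = (Nat.centralBinom (k-1) : ℝ) := by
    have h := succ_mul_catalan_eq_centralBinom (k-1)
    have hk1 : k - 1 + 1 = k := by omega
    rw [hk1] at h
    exact_mod_cast h
  have hpow : ((1:ℝ)/2)^(2*k) = ((4:ℝ)^k)⁻¹ := by
    rw [pow_mul, ← inv_pow]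
    norm_num
  have h4 : (0:ℝ) < 4^k := by positivity
  have hmain : (4:ℝ)^k ≤ 12 * ((2*(k:ℝ)) * Real.sqrt (2*(k:ℝ))) * (catalan (k-1) : ℝ) := by
    rcases Nat.lt_or_ge k 2 with h2 | h2
    · have hk1 : k = 1 := by omega
      subst hk1
      have h1s : (1:ℝ) ≤ Real.sqrt 2 := by
        rw [show (1:ℝ) = Real.sqrt 1 by simp]
        exact Real.sqrt_le_sqrt (by norm_num)
      norm_num [catalan_zero]
      nlinarith [h1s]
    · have hcb := cb_bound (k-1) (by omega)
      have hsm : Real.sqrt ((k:ℝ)-1) ≤ Real.sqrt (2*(k:ℝ)) :=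
        Real.sqrt_le_sqrt (by linarith)
      have hcast : ((k-1:ℕ):ℝ) = (k:ℝ) - 1 := by
        push_cast [Nat.cast_sub hk]; ring
      rw [hcast] at hcb
      have h4k : (4:ℝ)^k = 4 * 4^(k-1) := by
        rw [← pow_succ']
        congr 1
        omega
      have hcat0 : (0:ℝ) ≤ (catalan (k-1) : ℝ) := Nat.cast_nonneg _
      have hcb2 : (Nat.centralBinom (k-1) : ℝ) * Real.sqrt ((k:ℝ)-1)
          ≤ (k:ℝ) * (catalan (k-1):ℝ) * Real.sqrt (2*(k:ℝ)) := by
        rw [← hcat] at hcb ⊢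
        apply mul_le_mul_of_nonneg_left hsm (by positivity)
      nlinarith [Real.sqrt_nonneg ((k:ℝ)-1), Real.sqrt_nonneg (2*(k:ℝ))]
  have hT : (0:ℝ) < 12 * ((2*(k:ℝ)) * Real.sqrt (2*(k:ℝ))) := by positivity
  have step1 : 1 / (12 * ((2*(k:ℝ)) * Real.sqrt (2*(k:ℝ)))) ≤ (catalan (k-1) : ℝ) / 4^k := by
    rw [div_le_div_iff₀ hT h4]
    linarith
  have step2 : (catalan (k-1) : ℝ) / 4^k
      ≤ ((1:ℝ)/2)^(2*k) * (Nat.card {ε : Fin (2*k) → Bool //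
          (∀ n, 1 ≤ n → n < 2*k → 0 < walkPos (extendPath (2*k) ε) n) ∧
            walkPos (extendPath (2*k) ε) (2*k) = 0} : ℝ) := by
    rw [hpow, div_eq_mul_inv, mul_comm]
    apply mul_le_mul_of_nonneg_left _ (by positivity)
    exact_mod_cast hcard
  calc 1 / (12 * ((2*(k:ℕ):ℝ) * Real.sqrt (2*(k:ℕ))))
      = 1 / (12 * ((2*(k:ℝ)) * Real.sqrt (2*(k:ℝ)))) := by push_cast; ring_nf
    _ ≤ (catalan (k-1) : ℝ) / 4^k := step1
    _ ≤ _ := step2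

/-! ### sign lemmas -/

lemma sgn_pos (ε : ℕ → Bool) (n : ℕ) (h : 0 < walkPos ε n) : sgn ε n = 1 := by
  rw [sgn, if_pos h]

lemma sgn_neg (ε : ℕ → Bool) (n : ℕ) (h : walkPos ε n < 0) : sgn ε n = -1 := by
  rw [sgn, if_neg (by omega), if_pos h]

lemma sgn_zero_pos (ε : ℕ → Bool) (n : ℕ) (h : walkPos ε n = 0)
    (h2 : 0 < walkPos ε (n-1)) : sgn ε n = 1 := by
  rw [sgn, if_neg (by omega), if_neg (by omega), if_pos h2]

lemma sgn_zero_neg (ε : ℕ → Bool) (n : ℕ) (h : walkPos ε n = 0)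
    (h2 : ¬ 0 < walkPos ε (n-1)) : sgn ε n = -1 := by
  rw [sgn, if_neg (by omega), if_neg (by omega), if_neg h2]

lemma walkPos_parity (ε : ℕ → Bool) (n : ℕ) : (2:ℤ) ∣ walkPos ε n + n := by
  induction n with
  | zero => simp [walkPos]
  | succ n ih =>
    rw [walkPos_succ]
    by_cases hε : ε n <;> simp [hε] <;> push_cast <;> omega

lemma sgn_pair (ε : ℕ → Bool) (j : ℕ) : sgn ε (2*j+1) = sgn ε (2*j+2) := by
  have hstep := walkPos_succ ε (2*j+1)
  rw [show 2*j+1+1 = 2*j+2 from rfl] at hstep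
  have hpar := walkPos_parity ε (2*j+1)
  have ha : walkPos ε (2*j+1) ≠ 0 := by
    intro hc
    rw [hc] at hpar
    simp at hpar
  have hpm : walkPos ε (2*j+2) = walkPos ε (2*j+1) + 1
      ∨ walkPos ε (2*j+2) = walkPos ε (2*j+1) - 1 := by
    by_cases hε : ε (2*j+1) <;> simp [hε] at hstep <;> omega
  have hn1 : 2*j+2-1 = 2*j+1 := rfl
  rcases hpm with hpm | hpm <;>
  rcases lt_trichotomy (walkPos ε (2*j+2)) 0 with h|h|h
  · rw [sgn_neg _ _ (by omega), sgn_neg _ _ h]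
  · rcases (show 0 < walkPos ε (2*j+1) ∨ walkPos ε (2*j+1) < 0 by omega) with h2|h2
    · rw [sgn_pos _ _ h2, sgn_zero_pos _ _ h (by rw [hn1]; exact h2)]
    · rw [sgn_neg _ _ h2, sgn_zero_neg _ _ h (by rw [hn1]; omega)]
  · rw [sgn_pos _ _ (by omega), sgn_pos _ _ h]
  · rw [sgn_neg _ _ (by omega), sgn_neg _ _ h]
  · rcases (show 0 < walkPos ε (2*j+1) ∨ walkPos ε (2*j+1) < 0 by omega) with h2|h2
    · rw [sgn_pos _ _ h2, sgn_zero_pos _ _ h (by rw [hn1]; exact h2)]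
    · rw [sgn_neg _ _ h2, sgn_zero_neg _ _ h (by rw [hn1]; omega)]
  · rw [sgn_pos _ _ (by omega), sgn_pos _ _ h]

lemma NVis_even (ε : ℕ → Bool) (k : ℕ) : Even (NVis ε (2*k)) := by
  induction k with
  | zero => simp [NVis, lowSet]
  | succ k ih =>
    have hIcc : Finset.Icc 1 (2*(k+1)) = insert (2*k+1) (insert (2*k+2) (Finset.Icc 1 (2*k))) := by
      ext x
      simp only [Finset.mem_Icc, Finset.mem_insert]
      omega
    unfold NVis lowSet at ih ⊢
    rw [hIcc, Finset.filter_insert, Finset.filter_insert]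
    have hpair := sgn_pair ε k
    by_cases hsg : sgn ε (2*k+1) = -1
    · rw [if_pos hsg, if_pos (show sgn ε (2*k+2) = -1 by rw [← hpair]; exact hsg)]
      rw [Finset.card_insert_of_notMem (by
          simp only [Finset.mem_insert, Finset.mem_filter, Finset.mem_Icc]
          rintro (hc | ⟨⟨-, hc⟩, -⟩) <;> omega),
        Finset.card_insert_of_notMem (by
          simp only [Finset.mem_filter, Finset.mem_Icc]
          rintro ⟨⟨-, hc⟩, -⟩
          omega)]
      obtain ⟨m, hm⟩ := ih
      exact ⟨m+1, by omega⟩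
    · rw [if_neg hsg, if_neg (by rw [← hpair]; exact hsg)]
      exact ih

lemma NVis_le (ε : ℕ → Bool) (N : ℕ) : NVis ε N ≤ N := by
  unfold NVis lowSet
  calc ((Finset.Icc 1 N).filter (fun n => sgn ε n = -1)).card
      ≤ (Finset.Icc 1 N).card := Finset.card_filter_le _ _
    _ = N := by rw [Nat.card_Icc]; omega

lemma lowSet_posEvent (ε : ℕ → Bool) (k : ℕ) (hk : 1 ≤ k)
    (h : ∀ n, 1 ≤ n → n < 2*k → 0 < walkPos ε n) (h0 : walkPos ε (2*k) = 0) :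
    lowSet ε (2*k) = ∅ := by
  unfold lowSet
  rw [Finset.filter_eq_empty_iff]
  intro n hn
  rw [Finset.mem_Icc] at hn
  rcases Nat.lt_or_ge n (2*k) with h2 | h2
  · rw [sgn_pos _ _ (h n hn.1 h2)]
    omega
  · have hn2 : n = 2*k := by omega
    subst hn2
    rw [sgn_zero_pos _ _ h0 (h (2*k-1) (by omega) (by omega))]
    omega

/-! ### pathE and Zev lemmas -/

lemma ind_nonneg (p : Prop) : 0 ≤ ind p := by
  rw [ind]; split <;> norm_num

lemma ind_congr {p q : Prop} (h : p ↔ q) : ind p = ind q := by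
  rw [ind, ind]
  split <;> split <;> tauto

lemma pathE_mono (N : ℕ) (f g : (ℕ → Bool) → ℝ) (h : ∀ ε, f ε ≤ g ε) :
    pathE N f ≤ pathE N g := by
  unfold pathE
  apply mul_le_mul_of_nonneg_left _ (by positivity)
  exact Finset.sum_le_sum (fun ε _ => h _)

lemma pathE_nonneg (N : ℕ) (f : (ℕ → Bool) → ℝ) (h : ∀ ε, 0 ≤ f ε) : 0 ≤ pathE N f := by
  unfold pathE
  apply mul_nonneg (by positivity)
  exact Finset.sum_nonneg (fun ε _ => h _)

lemma pathE_sum (N : ℕ) (s : Finset ℕ) (F : ℕ → (ℕ → Bool) → ℝ) :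
    pathE N (fun ε => ∑ m ∈ s, F m ε) = ∑ m ∈ s, pathE N (F m) := by
  unfold pathE
  rw [Finset.sum_comm, Finset.mul_sum]

lemma Zev_nonneg (lam h : ℝ) (N : ℕ) (ω : ℕ → ℝ) (A : (ℕ → Bool) → Prop) :
    0 ≤ Zev lam h N ω A := by
  unfold Zev
  apply pathE_nonneg
  intro ε
  exact mul_nonneg (Real.exp_nonneg _) (ind_nonneg _)

lemma Zpart_ge (lam h : ℝ) (k : ℕ) (hk : 1 ≤ k) (ω : ℕ → ℝ) :
    pathE (2*k) (fun ε => ind ((∀ n, 1 ≤ n → n < 2*k → 0 < walkPos ε n)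
        ∧ walkPos ε (2*k) = 0))
      ≤ Zpart true lam h (2*k) ω := by
  unfold Zpart Zev
  apply pathE_mono
  intro ε
  rw [ind, ind]
  split_ifs with hA hB hB
  · rw [weight, lowSet_posEvent ε k hk hA.1 hA.2]
    simp
  · exact absurd (fun _ => hA.2) hB
  · exact mul_nonneg (Real.exp_nonneg _) (by norm_num)
  · simp [Real.exp_nonneg]

lemma num_decomp (lam h : ℝ) (k mbar : ℕ) (ω : ℕ → ℝ) :
    Zev lam h (2*k) ω (fun ε => (mbar ≤ NVis ε (2*k)) ∧ endOK true (2*k) ε)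
      = ∑ m ∈ (Finset.Icc mbar (2*k)).filter (fun m => Even m),
          Zev lam h (2*k) ω (fun ε => NVis ε (2*k) = m ∧ walkPos ε (2*k) = 0) := by
  unfold Zev
  rw [← pathE_sum]
  congr 1
  funext ε
  rw [← Finset.mul_sum]
  congr 1
  by_cases hS : walkPos ε (2*k) = 0
  · by_cases hm : mbar ≤ NVis ε (2*k)
    · rw [ind, if_pos ⟨hm, fun _ => hS⟩]
      rw [Finset.sum_eq_single (NVis ε (2*k))]
      · rw [ind, if_pos ⟨rfl, hS⟩]
      · intro m _ hne
        rw [ind, if_neg (fun hc => hne (hc.1.symm))]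
      · intro hc
        exfalso
        apply hc
        simp only [Finset.mem_filter, Finset.mem_Icc]
        exact ⟨⟨hm, NVis_le _ _⟩, NVis_even ε k⟩
    · rw [ind, if_neg (fun hc => hm hc.1)]
      rw [Finset.sum_eq_zero]
      intro m hmem
      simp only [Finset.mem_filter, Finset.mem_Icc] at hmem
      rw [ind, if_neg]
      intro hc
      apply hm
      rw [hc.1]
      exact hmem.1.1
  · rw [ind, if_neg (fun hc => hS (hc.2 rfl))]
    rw [Finset.sum_eq_zero]
    intro m _
    rw [ind, if_neg (fun hc => hS hc.2)]

lemma geom_bound (r : ℝ) (hr0 : 0 ≤ r) (hr1 : r < 1) (n : ℕ) :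
    ∑ j ∈ Finset.range n, r^j ≤ (1 - r)⁻¹ := by
  have h1 : (0:ℝ) < 1 - r := by linarith
  rw [geom_sum_eq (by linarith : r ≠ 1)]
  have h2 : (r^n - 1)/(r-1) = (1 - r^n) * (1-r)⁻¹ := by
    rw [show (1:ℝ) - r^n = -(r^n - 1) by ring, show (1:ℝ) - r = -(r - 1) by ring,
      mul_comm, ← div_eq_inv_mul, neg_div_neg_eq]
  rw [h2]
  have h3 : 1 - r^n ≤ 1 := by nlinarith [pow_nonneg hr0 n]
  nlinarith [inv_pos.mpr h1]

lemma part2 (lam eps : ℝ) (hlam : 0 < lam) (heps : 0 < eps) (h : ℝ) (k mbar : ℕ)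
    (ω : ℕ → ℝ) (hk : 1 ≤ k) (hmb : Even mbar) (hmble : mbar ≤ 2 * k)
    (hyp : ∀ m : ℕ, Even m → mbar ≤ m → m ≤ 2 * k →
      Real.log (Zev lam h (2 * k) ω
          (fun ε => NVis ε (2 * k) = m ∧ walkPos ε (2 * k) = 0)) / (2 * k)
        < -(lam * eps * m) / (2 * k)) :
    polyProb true lam h (2 * k) ω (fun ε => mbar ≤ NVis ε (2 * k))
      ≤ (12 * (1 - Real.exp (-(2 * (lam * eps))))⁻¹) * ((2 * k : ℝ) * Real.sqrt (2 * k))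
          * Real.exp (-(lam * eps * mbar)) := by
  set r := Real.exp (-(2 * (lam * eps))) with hrdef
  have hr0 : 0 < r := Real.exp_pos _
  have hr1 : r < 1 := by
    rw [hrdef, Real.exp_lt_one_iff]
    nlinarith
  have h1r : (0:ℝ) < 1 - r := by linarith
  have hkR : (0:ℝ) < (k:ℝ) := by exact_mod_cast hk
  have hsq : (0:ℝ) < Real.sqrt (2 * k) := Real.sqrt_pos.mpr (by positivity)
  have hT0 : (0:ℝ) < (2 * k : ℝ) * Real.sqrt (2 * k) := by positivity
  have hZ : 1 / (12 * ((2 * k : ℝ) * Real.sqrt (2 * k))) ≤ Zpart true lam h (2 * k) ω :=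
    le_trans (part1 k hk) (Zpart_ge lam h k hk ω)
  have hZ0 : 0 < Zpart true lam h (2 * k) ω := lt_of_lt_of_le (by positivity) hZ
  have hnum : Zev lam h (2 * k) ω (fun ε => (mbar ≤ NVis ε (2 * k)) ∧ endOK true (2 * k) ε)
      ≤ Real.exp (-(lam * eps * mbar)) * (1 - r)⁻¹ := by
    rw [num_decomp]
    have hterm : ∀ m ∈ (Finset.Icc mbar (2 * k)).filter (fun m => Even m),
        Zev lam h (2 * k) ω (fun ε => NVis ε (2 * k) = m ∧ walkPos ε (2 * k) = 0)
          ≤ Real.exp (-(lam * eps * m)) := by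
      intro m hm
      simp only [Finset.mem_filter, Finset.mem_Icc] at hm
      have hlog := hyp m hm.2 hm.1.1 hm.1.2
      rcases le_or_gt (Zev lam h (2 * k) ω
          (fun ε => NVis ε (2 * k) = m ∧ walkPos ε (2 * k) = 0)) 0 with hz | hz
      · exact le_trans hz (Real.exp_nonneg _)
      · have h2k : (0:ℝ) < (2 * k : ℝ) := by positivity
        have h3 := (div_lt_div_iff₀ h2k h2k).mp hlog
        have h4 := lt_of_mul_lt_mul_right h3 h2k.le
        calc Zev lam h (2 * k) ω (fun ε => NVis ε (2 * k) = m ∧ walkPos ε (2 * k) = 0)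
            = Real.exp (Real.log (Zev lam h (2 * k) ω
                (fun ε => NVis ε (2 * k) = m ∧ walkPos ε (2 * k) = 0))) :=
              (Real.exp_log hz).symm
          _ ≤ Real.exp (-(lam * eps * m)) := Real.exp_le_exp.mpr h4.le
    have himg : (Finset.Icc mbar (2 * k)).filter (fun m => Even m)
        ⊆ (Finset.range (k + 1)).image (fun j => mbar + 2 * j) := by
      intro m hm
      simp only [Finset.mem_filter, Finset.mem_Icc] at hm
      rw [Finset.mem_image]
      obtain ⟨a, ha⟩ := hm.2
      obtain ⟨b, hb⟩ := hmb
      refine ⟨a - b, ?_, ?_⟩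
      · rw [Finset.mem_range]; omega
      · omega
    calc ∑ m ∈ (Finset.Icc mbar (2 * k)).filter (fun m => Even m),
          Zev lam h (2 * k) ω (fun ε => NVis ε (2 * k) = m ∧ walkPos ε (2 * k) = 0)
        ≤ ∑ m ∈ (Finset.Icc mbar (2 * k)).filter (fun m => Even m),
            Real.exp (-(lam * eps * m)) := Finset.sum_le_sum hterm
      _ ≤ ∑ m ∈ (Finset.range (k + 1)).image (fun j => mbar + 2 * j),
            Real.exp (-(lam * eps * m)) :=
          Finset.sum_le_sum_of_subset_of_nonneg himg
            (fun _ _ _ => Real.exp_nonneg _)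
      _ = ∑ j ∈ Finset.range (k + 1), Real.exp (-(lam * eps * (mbar + 2 * j : ℕ))) :=
          Finset.sum_image (fun i _ j _ hij => by omega)
      _ = ∑ j ∈ Finset.range (k + 1), Real.exp (-(lam * eps * mbar)) * r ^ j := by
          apply Finset.sum_congr rfl
          intro j _
          rw [hrdef, ← Real.exp_nat_mul, ← Real.exp_add]
          congr 1
          push_cast
          ring
      _ = Real.exp (-(lam * eps * mbar)) * ∑ j ∈ Finset.range (k + 1), r ^ j := by
          rw [Finset.mul_sum]
      _ ≤ Real.exp (-(lam * eps * mbar)) * (1 - r)⁻¹ :=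
          mul_le_mul_of_nonneg_left (geom_bound r hr0.le hr1 _) (Real.exp_nonneg _)
  unfold polyProb
  rw [div_le_iff₀ hZ0]
  calc Zev lam h (2 * k) ω (fun ε => (mbar ≤ NVis ε (2 * k)) ∧ endOK true (2 * k) ε)
      ≤ Real.exp (-(lam * eps * mbar)) * (1 - r)⁻¹ := hnum
    _ = ((12 * (1 - r)⁻¹) * ((2 * k : ℝ) * Real.sqrt (2 * k)) * Real.exp (-(lam * eps * mbar)))
        * (1 / (12 * ((2 * k : ℝ) * Real.sqrt (2 * k)))) := by
        field_simp
    _ ≤ ((12 * (1 - r)⁻¹) * ((2 * k : ℝ) * Real.sqrt (2 * k)) * Real.exp (-(lam * eps * mbar)))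
        * Zpart true lam h (2 * k) ω := by
        apply mul_le_mul_of_nonneg_left hZ
        have : (0:ℝ) ≤ (1 - r)⁻¹ := (inv_pos.mpr h1r).le
        positivity

end Aux


/-- Deterministic tail bound for `𝒩` given small restricted free
energies. There is an absolute `c₃ > 0` with
`P(S_n > 0, n = 1,…,N-1, S_N = 0) ≥ 1/(c₃ N^{3/2})`, and a constant `c₄ > 0` depending
only on `λε` such that: if `F^c_{N,ω}(λ,h;m) < -λεm/N` for all (even) `m ≥ m̄`, then
`P^c_{N,ω}(𝒩 ≥ m̄) ≤ c₄ N^{3/2} exp(-λεm̄)`. -/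
theorem deterministic_visits_tail
    (lam eps : ℝ) (hlam : 0 < lam) (heps : 0 < eps) :
    (∃ c₃ > (0 : ℝ), ∀ k : ℕ, 1 ≤ k →
      1 / (c₃ * ((2 * k : ℝ) * Real.sqrt (2 * k)))
        ≤ pathE (2 * k) (fun ε =>
            ind ((∀ n, 1 ≤ n → n < 2 * k → 0 < walkPos ε n) ∧ walkPos ε (2 * k) = 0))) ∧
    ∃ c₄ > (0 : ℝ), ∀ (h : ℝ) (k mbar : ℕ) (ω : ℕ → ℝ), 1 ≤ k → Even mbar → mbar ≤ 2 * k →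
      (∀ m : ℕ, Even m → mbar ≤ m → m ≤ 2 * k →
        Real.log (Zev lam h (2 * k) ω
            (fun ε => NVis ε (2 * k) = m ∧ walkPos ε (2 * k) = 0)) / (2 * k)
          < -(lam * eps * m) / (2 * k)) →
      polyProb true lam h (2 * k) ω (fun ε => mbar ≤ NVis ε (2 * k))
        ≤ c₄ * ((2 * k : ℝ) * Real.sqrt (2 * k)) * Real.exp (-(lam * eps * mbar)) := by
  constructor
  · exact ⟨12, by norm_num, fun k hk => Aux.part1 k hk⟩
  · refine ⟨12 * (1 - Real.exp (-(2 * (lam * eps))))⁻¹, ?_, ?_⟩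
    · have hr1 : Real.exp (-(2 * (lam * eps))) < 1 := by
        rw [Real.exp_lt_one_iff]
        nlinarith
      have : (0:ℝ) < 1 - Real.exp (-(2 * (lam * eps))) := by linarith
      positivity
    · intro h k mbar ω hk hmb hmble hyp
      exact Aux.part2 lam eps hlam heps h k mbar ω hk hmb hmble hyp
end

section
/- (Integration-by-parts identity for symmetric random variables.) Let η be a real symmetric random variable (η ∼ −η) with E[η²] = 1, and let G : ℝ → ℝ be three times continuously differentiable with all expectations and integrals below finite. Then E[ η G(η) ] = E[ G′(η) ] + E[ (η² − 1) ∫_0^η G″(u) du ] − (1/4) E[ |η| ∫_{−|η|}^{|η|} (η² − u²) G‴(u) du ]. -/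
open MeasureTheory ProbabilityTheory Filter Finset

open MeasureTheory ProbabilityTheory Filter Finset intervalIntegral

section Aux

variable (G : ℝ → ℝ)

lemma ibp_d1 (hG : ContDiff ℝ 3 G) (x : ℝ) : HasDerivAt G (deriv G x) x :=
  ((hG.differentiable (by norm_num)) x).hasDerivAt

lemma ibp_cd2 (hG : ContDiff ℝ 3 G) : ContDiff ℝ 2 (deriv G) :=
  (contDiff_succ_iff_deriv.mp (show ContDiff ℝ (2+1) G by norm_num [hG])).2.2

lemma ibp_cd3 (hG : ContDiff ℝ 3 G) : ContDiff ℝ 1 (deriv (deriv G)) :=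
  (contDiff_succ_iff_deriv.mp (show ContDiff ℝ (1+1) (deriv G) by norm_num [ibp_cd2 G hG])).2.2

lemma ibp_d2 (hG : ContDiff ℝ 3 G) (x : ℝ) : HasDerivAt (deriv G) (deriv (deriv G) x) x :=
  (((ibp_cd2 G hG).differentiable (by norm_num)) x).hasDerivAt

lemma ibp_d3 (hG : ContDiff ℝ 3 G) (x : ℝ) :
    HasDerivAt (deriv (deriv G)) (deriv (deriv (deriv G)) x) x :=
  (((ibp_cd3 G hG).differentiable (by norm_num)) x).hasDerivAt

lemma ibp_c3 (hG : ContDiff ℝ 3 G) : Continuous (deriv (deriv (deriv G))) :=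
  ((contDiff_succ_iff_deriv.mp
    (show ContDiff ℝ (0+1) (deriv (deriv G)) by norm_num [ibp_cd3 G hG])).2.2).continuous

lemma ibp_aux1 (hG : ContDiff ℝ 3 G) (x : ℝ) :
    ∫ u in (0:ℝ)..x, deriv (deriv G) u = deriv G x - deriv G 0 :=
  intervalIntegral.integral_eq_sub_of_hasDerivAt (fun u _ => ibp_d2 G hG u)
    (((ibp_cd3 G hG).continuous).intervalIntegrable _ _)

lemma ibp_aux2 (hG : ContDiff ℝ 3 G) (a : ℝ) :
    ∫ u in (-a)..a, (a^2 - u^2) * deriv (deriv (deriv G)) u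
      = 2*a*(deriv G a + deriv G (-a)) - 2*(G a - G (-a)) := by
  have c2 : Continuous (deriv (deriv G)) := (ibp_cd3 G hG).continuous
  have c3 : Continuous (deriv (deriv (deriv G))) := ibp_c3 G hG
  have hf : ∀ u : ℝ, HasDerivAt (fun v => (a^2 - v^2) * deriv (deriv G) v)
      ((a^2-u^2) * deriv (deriv (deriv G)) u - 2*u*deriv (deriv G) u) u := by
    intro u
    have h := ((hasDerivAt_const u (a^2)).sub (hasDerivAt_pow 2 u)).mul (ibp_d3 G hG u)
    refine h.congr_deriv ?_
    push_cast
    simp only [Pi.sub_apply]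
    ring
  have hA : IntervalIntegrable (fun u => (a^2-u^2) * deriv (deriv (deriv G)) u)
      MeasureTheory.volume (-a) a :=
    ((continuous_const.sub (continuous_pow 2)).mul c3).intervalIntegrable _ _
  have hB : IntervalIntegrable (fun u => 2*u*deriv (deriv G) u)
      MeasureTheory.volume (-a) a :=
    (((continuous_const.mul continuous_id).mul c2)).intervalIntegrable _ _
  have e1 := intervalIntegral.integral_eq_sub_of_hasDerivAt (fun u _ => hf u) (hA.sub hB)
  have e1' : ∫ u in (-a)..a,
      ((a^2-u^2) * deriv (deriv (deriv G)) u - 2*u*deriv (deriv G) u) = 0 := by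
    rw [e1]; ring
  have hsplit := intervalIntegral.integral_sub hA hB
  have hg : ∀ u : ℝ, HasDerivAt (fun v => v * deriv G v - G v)
      (u * deriv (deriv G) u) u := by
    intro u
    have h := ((hasDerivAt_id u).mul (ibp_d2 G hG u)).sub (ibp_d1 G hG u)
    refine h.congr_deriv ?_
    simp [id_eq]
  have e2 : ∫ u in (-a)..a, u * deriv (deriv G) u
      = (a * deriv G a - G a) - ((-a) * deriv G (-a) - G (-a)) :=
    intervalIntegral.integral_eq_sub_of_hasDerivAt (fun u _ => hg u)
      ((continuous_id.mul c2).intervalIntegrable _ _)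
  have h3 : ∫ u in (-a)..a, 2*u*deriv (deriv G) u
      = 2 * ∫ u in (-a)..a, u * deriv (deriv G) u := by
    simp only [mul_assoc]
    exact intervalIntegral.integral_const_mul 2 _
  linear_combination e1' - hsplit + h3 + 2*e2

/-- Closed form of the combined integrand. -/
noncomputable def ibpC (x : ℝ) : ℝ :=
  x * G x - deriv G x - (x^2-1)*(deriv G x - deriv G 0)
    + (x^2/2)*(deriv G |x| + deriv G (-|x|)) - (|x|/2)*(G |x| - G (-|x|))

lemma ibp_closed (hG : ContDiff ℝ 3 G) (x : ℝ) :
    x * G x - deriv G x - ((x^2-1) * ∫ u in (0:ℝ)..x, deriv (deriv G) u)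
      + (1/4) * (|x| * ∫ u in (-|x|)..|x|, (x^2-u^2) * deriv (deriv (deriv G)) u)
    = ibpC G x := by
  rw [ibp_aux1 G hG x, show (x:ℝ)^2 = |x|^2 from (sq_abs x).symm, ibp_aux2 G hG |x|, ibpC]
  linear_combination ((deriv G |x| + deriv G (-|x|))/2 - (deriv G x - deriv G 0)) * (abs_mul_abs_self x)

lemma ibpC_cont (hG : ContDiff ℝ 3 G) : Continuous (ibpC G) := by
  have c0 : Continuous G := hG.continuous
  have c1 : Continuous (deriv G) := (ibp_cd2 G hG).continuous
  have cabs : Continuous (fun x : ℝ => |x|) := continuous_abs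
  exact ((((continuous_id.mul c0).sub c1).sub
      (((continuous_pow 2).sub continuous_const).mul (c1.sub continuous_const))).add
      (((continuous_pow 2).div_const 2).mul ((c1.comp cabs).add (c1.comp cabs.neg)))).sub
      ((cabs.div_const 2).mul ((c0.comp cabs).sub (c0.comp cabs.neg)))

lemma ibpC_sum (x : ℝ) : ibpC G x + ibpC G (-x) = 2*(x^2-1)*deriv G 0 := by
  rcases le_total 0 x with h | h
  · simp only [ibpC, abs_of_nonneg h, abs_neg, neg_neg]
    ring
  · simp only [ibpC, abs_of_nonpos h, abs_neg, neg_neg]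
    ring

end Aux

/-- Integration-by-parts identity for symmetric random variables.
If `η` is symmetric with `E[η²] = 1` and `G` is `C³` with all quantities integrable, then
`E[ηG(η)] = E[G'(η)] + E[(η²-1)∫₀^η G''] - (1/4) E[|η| ∫_{-|η|}^{|η|} (η²-u²) G'''(u) du]`. -/
theorem symmetric_integration_by_parts
    {Ω : Type*} [MeasurableSpace Ω] (P : Measure Ω) [IsProbabilityMeasure P]
    (eta : Ω → ℝ) (hmeas : Measurable eta)
    (hsymm : P.map (fun ω => -eta ω) = P.map eta)
    (hvar : (∫ ω, (eta ω) ^ 2 ∂P) = 1)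
    (G : ℝ → ℝ) (hG : ContDiff ℝ 3 G)
    (hint₀ : Integrable (fun ω => eta ω * G (eta ω)) P)
    (hint₁ : Integrable (fun ω => deriv G (eta ω)) P)
    (hint₂ : Integrable (fun ω =>
      ((eta ω) ^ 2 - 1) * ∫ u in (0 : ℝ)..(eta ω), deriv (deriv G) u) P)
    (hint₃ : Integrable (fun ω =>
      |eta ω| * ∫ u in (-|eta ω|)..(|eta ω|),
        ((eta ω) ^ 2 - u ^ 2) * deriv (deriv (deriv G)) u) P) :
    (∫ ω, eta ω * G (eta ω) ∂P)
      = (∫ ω, deriv G (eta ω) ∂P)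
        + (∫ ω, (((eta ω) ^ 2 - 1) * ∫ u in (0 : ℝ)..(eta ω), deriv (deriv G) u) ∂P)
        - (1 / 4) * ∫ ω, (|eta ω| * ∫ u in (-|eta ω|)..(|eta ω|),
            ((eta ω) ^ 2 - u ^ 2) * deriv (deriv (deriv G)) u) ∂P := by
  have hI3' : Integrable (fun ω => (1/4) * (|eta ω| * ∫ u in (-|eta ω|)..(|eta ω|),
      ((eta ω) ^ 2 - u ^ 2) * deriv (deriv (deriv G)) u)) P := hint₃.const_mul (1/4)
  have hcomb : Integrable (fun ω =>
      eta ω * G (eta ω) - deriv G (eta ω)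
        - (((eta ω)^2 - 1) * ∫ u in (0 : ℝ)..(eta ω), deriv (deriv G) u)
        + (1/4) * (|eta ω| * ∫ u in (-|eta ω|)..(|eta ω|),
            ((eta ω) ^ 2 - u ^ 2) * deriv (deriv (deriv G)) u)) P :=
    ((hint₀.sub hint₁).sub hint₂).add hI3'
  have hcombC : (fun ω =>
      eta ω * G (eta ω) - deriv G (eta ω)
        - (((eta ω)^2 - 1) * ∫ u in (0 : ℝ)..(eta ω), deriv (deriv G) u)
        + (1/4) * (|eta ω| * ∫ u in (-|eta ω|)..(|eta ω|),
            ((eta ω) ^ 2 - u ^ 2) * deriv (deriv (deriv G)) u))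
      = fun ω => ibpC G (eta ω) := funext fun ω => ibp_closed G hG (eta ω)
  have hIc : Integrable (fun ω => ibpC G (eta ω)) P := hcombC ▸ hcomb
  have eA : ∫ ω, (eta ω * G (eta ω) - deriv G (eta ω)
        - (((eta ω)^2 - 1) * ∫ u in (0 : ℝ)..(eta ω), deriv (deriv G) u)
        + (1/4) * (|eta ω| * ∫ u in (-|eta ω|)..(|eta ω|),
            ((eta ω) ^ 2 - u ^ 2) * deriv (deriv (deriv G)) u)) ∂P
      = (∫ ω, (eta ω * G (eta ω) - deriv G (eta ω)
          - (((eta ω)^2 - 1) * ∫ u in (0 : ℝ)..(eta ω), deriv (deriv G) u)) ∂P)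
        + ∫ ω, ((1/4) * (|eta ω| * ∫ u in (-|eta ω|)..(|eta ω|),
            ((eta ω) ^ 2 - u ^ 2) * deriv (deriv (deriv G)) u)) ∂P :=
    MeasureTheory.integral_add ((hint₀.sub hint₁).sub hint₂) hI3'
  have eS3 : ∫ ω, (eta ω * G (eta ω) - deriv G (eta ω)
        - (((eta ω)^2 - 1) * ∫ u in (0 : ℝ)..(eta ω), deriv (deriv G) u)) ∂P
      = (∫ ω, (eta ω * G (eta ω) - deriv G (eta ω)) ∂P)
        - ∫ ω, (((eta ω)^2 - 1) * ∫ u in (0 : ℝ)..(eta ω), deriv (deriv G) u) ∂P :=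
    MeasureTheory.integral_sub (hint₀.sub hint₁) hint₂
  have eS2 : ∫ ω, (eta ω * G (eta ω) - deriv G (eta ω)) ∂P
      = (∫ ω, eta ω * G (eta ω) ∂P) - ∫ ω, deriv G (eta ω) ∂P :=
    MeasureTheory.integral_sub hint₀ hint₁
  have eS4 : ∫ ω, ((1/4) * (|eta ω| * ∫ u in (-|eta ω|)..(|eta ω|),
        ((eta ω) ^ 2 - u ^ 2) * deriv (deriv (deriv G)) u)) ∂P
      = (1/4) * ∫ ω, (|eta ω| * ∫ u in (-|eta ω|)..(|eta ω|),
        ((eta ω) ^ 2 - u ^ 2) * deriv (deriv (deriv G)) u) ∂P :=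
    MeasureTheory.integral_const_mul _ _
  have e1 : ∫ ω, ibpC G (eta ω) ∂P
      = (∫ ω, eta ω * G (eta ω) ∂P) - (∫ ω, deriv G (eta ω) ∂P)
        - (∫ ω, (((eta ω) ^ 2 - 1) * ∫ u in (0 : ℝ)..(eta ω), deriv (deriv G) u) ∂P)
        + (1/4) * ∫ ω, (|eta ω| * ∫ u in (-|eta ω|)..(|eta ω|),
            ((eta ω) ^ 2 - u ^ 2) * deriv (deriv (deriv G)) u) ∂P := by
    rw [← hcombC, eA, eS3, eS2, eS4]
  have hI2 : Integrable (fun ω => (eta ω)^2) P := by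
    by_contra h
    rw [integral_undef h] at hvar
    norm_num at hvar
  have hC : Continuous (ibpC G) := ibpC_cont G hG
  have hmap : ∫ ω, ibpC G (eta ω) ∂P = ∫ ω, ibpC G (-(eta ω)) ∂P := by
    rw [← integral_map hmeas.aemeasurable hC.aestronglyMeasurable,
      ← integral_map (φ := fun ω => -eta ω) hmeas.neg.aemeasurable hC.aestronglyMeasurable, hsymm]
  have hIneg : Integrable (fun ω => ibpC G (-(eta ω))) P := by
    have h1 : Integrable (ibpC G) (P.map eta) :=
      (integrable_map_measure hC.aestronglyMeasurable hmeas.aemeasurable).mpr hIc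
    rw [← hsymm] at h1
    exact (integrable_map_measure hC.aestronglyMeasurable hmeas.neg.aemeasurable).mp h1
  have hsum : ∫ ω, (ibpC G (eta ω) + ibpC G (-(eta ω))) ∂P
      = ∫ ω, 2*((eta ω)^2 - 1) * deriv G 0 ∂P :=
    integral_congr_ae (Filter.Eventually.of_forall fun ω => ibpC_sum G (eta ω))
  have hz : ∫ ω, 2*((eta ω)^2 - 1) * deriv G 0 ∂P = 0 := by
    have hrw : (fun ω => 2*((eta ω)^2 - 1) * deriv G 0)
        = fun ω => (2 * deriv G 0) * ((eta ω)^2 - 1) := by funext ω; ring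
    rw [hrw, MeasureTheory.integral_const_mul, MeasureTheory.integral_sub hI2 (integrable_const 1), hvar]
    simp
  have h2I : ∫ ω, ibpC G (eta ω) ∂P = 0 := by
    have := MeasureTheory.integral_add hIc hIneg
    rw [hsum, hz] at this
    linarith [hmap, this]
  rw [h2I] at e1
  linarith [e1]
end
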